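/- arXiv:1809.10938 — 6 statements merged into one kernel-verified Lean document; each statement's English description precedes it below -/
import Mathlib

section
/- Let H be a subspace of F_2^n of dimension d and let k ≤ d. Then the number of vectors in H of Hamming weight at most k is at most Σ_{i=0}^{k} C(d,i), the number of vectors of Hamming weight at most k in the subspace spanned by the first d standard basis vectors. -/
open Module Submodule Set Finset

theorem stmt2 (n d k : ℕ) (hk : k ≤ d) (H : Submodule (ZMod 2) (Fin n → ZMod 2))
    (hd : Module.finrank (ZMod 2) H = d) :
    Set.ncard {v : Fin n → ZMod 2 | v ∈ H ∧ hammingNorm v ≤ k} ≤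
      ∑ i ∈ Finset.range (k + 1), d.choose i := by
  classical
  -- coordinate functionals on H
  set Φ : Fin n → Module.Dual (ZMod 2) H :=
    fun i => (LinearMap.proj i).comp H.subtype with hΦ
  set W : Submodule (ZMod 2) (Module.Dual (ZMod 2) H) :=
    Submodule.span (ZMod 2) (Set.range Φ) with hWdef
  have hW : W.dualCoannihilator = ⊥ := by
    rw [Submodule.eq_bot_iff]
    intro x hx
    have hx' : ∀ f ∈ Set.range Φ, f x = 0 := by
      intro f hf
      have := Submodule.coe_dualCoannihilator_span (R := ZMod 2) (Set.range Φ)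
      have hx2 : x ∈ {y : H | ∀ f ∈ Set.range Φ, f y = 0} := by
        rw [← this]; exact hx
      exact hx2 f hf
    ext i
    exact hx' (Φ i) ⟨i, rfl⟩
  have hWrank : Module.finrank (ZMod 2) W = d := by
    have := Subspace.finrank_add_finrank_dualCoannihilator_eq W
    rw [hW, finrank_bot, hd] at this
    omega
  -- extract a basis subset of the coordinate functionals
  obtain ⟨b, hb_sub, hb_span, hb_ind⟩ :=
    exists_linearIndependent (ZMod 2) (Set.range Φ)
  have hb_fin : b.Finite := by
    have : FiniteDimensional (ZMod 2) (Module.Dual (ZMod 2) H) := inferInstance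
    exact Set.Finite.subset (Set.finite_range Φ) hb_sub
  haveI := hb_fin.fintype
  have hb_card : b.toFinset.card = d := by
    have := finrank_span_set_eq_card hb_ind
    rw [hb_span, ← hWdef, hWrank] at this
    omega
  -- choose coordinates realizing the basis functionals
  have hchoice : ∀ f ∈ b.toFinset, ∃ i : Fin n, Φ i = f := by
    intro f hf
    exact hb_sub (Set.mem_toFinset.mp hf)
  choose g hg using hchoice
  set S : Finset (Fin n) := b.toFinset.attach.image (fun x => g x.1 x.2) with hSdef
  have hScard : S.card = d := by
    rw [hSdef, Finset.card_image_of_injective, Finset.card_attach, hb_card]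
    intro x y hxy
    have : Φ (g x.1 x.2) = Φ (g y.1 y.2) := congrArg Φ hxy
    rw [hg x.1 x.2, hg y.1 y.2] at this
    exact Subtype.ext this
  -- key: a vector of H vanishing on S is zero
  have hkey : ∀ v ∈ H, (∀ i ∈ S, v i = 0) → v = 0 := by
    intro v hv hvS
    have hmem : (⟨v, hv⟩ : H) ∈ W.dualCoannihilator := by
      rw [hWdef, ← hb_span]
      have := Submodule.coe_dualCoannihilator_span (R := ZMod 2) b
      have : (⟨v, hv⟩ : H) ∈ {y : H | ∀ f ∈ b, f y = 0} := by
        intro f hf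
        have hf' : f ∈ b.toFinset := Set.mem_toFinset.mpr hf
        have : Φ (g f hf') = f := hg f hf'
        rw [← this]
        exact hvS (g f hf') (Finset.mem_image.mpr ⟨⟨f, hf'⟩, Finset.mem_attach _ _, rfl⟩)
      rwa [← Submodule.coe_dualCoannihilator_span (R := ZMod 2) b] at this
    rw [hW] at hmem
    exact congrArg Subtype.val hmem
  have hzmod : ∀ a : ZMod 2, a = 0 ∨ a = 1 := by decide
  -- map to subsets of S
  set F : (Fin n → ZMod 2) → Finset (Fin n) := fun v => S.filter (fun i => v i = 1) with hFdef
  set A : Set (Fin n → ZMod 2) := {v | v ∈ H ∧ hammingNorm v ≤ k} with hA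
  set T : Finset (Finset (Fin n)) := S.powerset.filter (fun t => t.card ≤ k) with hT
  have hmaps : ∀ v ∈ A, F v ∈ (T : Set (Finset (Fin n))) := by
    intro v hv
    simp only [hT, Finset.coe_filter, Set.mem_setOf_eq, Finset.mem_powerset]
    constructor
    · exact Finset.filter_subset _ _
    · calc (S.filter (fun i => v i = 1)).card
          ≤ (Finset.univ.filter (fun i => v i ≠ 0)).card := by
            apply Finset.card_le_card
            intro i hi
            rw [Finset.mem_filter] at hi ⊢
            refine ⟨Finset.mem_univ _, ?_⟩
            rw [hi.2]; decide
        _ = hammingNorm v := rfl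
        _ ≤ k := hv.2
  have hinj : Set.InjOn F A := by
    intro v hv w hw hvw
    have heq : ∀ i ∈ S, v i = w i := by
      intro i hi
      have h1 : (i ∈ F v) ↔ (i ∈ F w) := by rw [hvw]
      simp only [hFdef, Finset.mem_filter] at h1
      rcases hzmod (v i) with h | h <;> rcases hzmod (w i) with h' | h' <;>
        simp [h, h', hi] at h1 ⊢
    have hsub : v - w ∈ H := sub_mem hv.1 hw.1
    have := hkey (v - w) hsub (by
      intro i hi
      simp [heq i hi])
    have := sub_eq_zero.mp this
    exact this
  -- cardinality of T
  have hTcard : T.card = ∑ i ∈ Finset.range (k + 1), d.choose i := by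
    have hTdecomp : T = (Finset.range (k + 1)).biUnion (fun i => S.powersetCard i) := by
      ext t
      simp only [hT, Finset.mem_filter, Finset.mem_powerset, Finset.mem_biUnion,
        Finset.mem_range, Finset.mem_powersetCard]
      constructor
      · rintro ⟨h1, h2⟩; exact ⟨t.card, by omega, h1, rfl⟩
      · rintro ⟨i, hi, h1, h2⟩; exact ⟨h1, by omega⟩
    rw [hTdecomp, Finset.card_biUnion]
    · apply Finset.sum_congr rfl
      intro i _
      rw [Finset.card_powersetCard, hScard]
    · intro i _ j _ hij
      apply Finset.disjoint_left.mpr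
      intro t ht ht'
      rw [Finset.mem_powersetCard] at ht ht'
      exact hij (ht.2 ▸ ht'.2 ▸ rfl)
  calc A.ncard = (F '' A).ncard := (Set.ncard_image_of_injOn hinj).symm
    _ ≤ (T : Set (Finset (Fin n))).ncard := by
        apply Set.ncard_le_ncard
        · rintro t ⟨v, hv, rfl⟩; exact hmaps v hv
        · exact (T : Set (Finset (Fin n))).toFinite
    _ = T.card := Set.ncard_coe_finset T
    _ = _ := hTcard
end

section
/- For every δ > 0 there exists a positive integer k depending only on δ with the following property: for all positive integers n_1, n_2 and every subset ℬ' ⊆ F_2^{n_1}×F_2^{n_2} with |ℬ'| ≥ δ·2^{n_1+n_2}, there exist a subspace U ⊆ F_2^{n_1} of codimension at most k and, for each u ∈ U, a subspace V_u ⊆ F_2^{n_2} of codimension at most k, with all the subspaces V_u having the same codimension, such that for every u ∈ U and every v ∈ V_u the matrix u⊗v is a sum of at most 16 matrices u'⊗v' with (u',v') ∈ ℬ'. -/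
open Finset Module

namespace Stmt8Aux


variable {n : ℕ}

/-- The character `χ_ξ(x) = (-1)^{⟨ξ,x⟩}` on `F_2^n`. -/
noncomputable def chi (ξ x : Fin n → ZMod 2) : ℝ :=
  (-1 : ℝ) ^ ((∑ i, ξ i * x i).val)

lemma neg_one_pow_val_add (s t : ZMod 2) :
    (-1 : ℝ) ^ ((s + t).val) = (-1 : ℝ) ^ s.val * (-1 : ℝ) ^ t.val := by
  rw [ZMod.val_add, ← neg_one_pow_eq_pow_mod_two, pow_add]

lemma chi_comm (ξ x : Fin n → ZMod 2) : chi ξ x = chi x ξ := by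
  unfold chi
  congr 1
  exact congrArg _ (Finset.sum_congr rfl fun i _ => mul_comm _ _)

lemma chi_add_right (ξ x y : Fin n → ZMod 2) :
    chi ξ (x + y) = chi ξ x * chi ξ y := by
  unfold chi
  rw [show (∑ i, ξ i * (x + y) i) = (∑ i, ξ i * x i) + (∑ i, ξ i * y i) by
    rw [← Finset.sum_add_distrib]; exact Finset.sum_congr rfl fun i _ => by
      simp [mul_add]]
  exact neg_one_pow_val_add _ _

lemma chi_zero_left (x : Fin n → ZMod 2) : chi 0 x = 1 := by
  simp [chi]

lemma chi_zero_right (ξ : Fin n → ZMod 2) : chi ξ 0 = 1 := by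
  simp [chi]

lemma chi_eq_one_of (ξ x : Fin n → ZMod 2) (h : ∑ i, ξ i * x i = 0) :
    chi ξ x = 1 := by simp [chi, h]

lemma neg_one_le_chi (ξ x : Fin n → ZMod 2) : -1 ≤ chi ξ x := by
  unfold chi
  rcases Nat.even_or_odd ((∑ i, ξ i * x i).val) with h | h
  · rw [h.neg_one_pow]; norm_num
  · rw [h.neg_one_pow]

lemma chi_le_one (ξ x : Fin n → ZMod 2) : chi ξ x ≤ 1 := by
  unfold chi
  rcases Nat.even_or_odd ((∑ i, ξ i * x i).val) with h | h
  · rw [h.neg_one_pow]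
  · rw [h.neg_one_pow]; norm_num

lemma zmod2_cases (s : ZMod 2) : s = 0 ∨ s = 1 := by
  fin_cases s
  · exact Or.inl rfl
  · exact Or.inr rfl

lemma sum_chi_right {x : Fin n → ZMod 2} (hx : x ≠ 0) :
    ∑ ξ, chi ξ x = 0 := by
  obtain ⟨i, hi⟩ : ∃ i, x i ≠ 0 := by
    by_contra h
    push_neg at h
    exact hx (funext h)
  have hxi : x i = 1 := (zmod2_cases (x i)).resolve_left hi
  have hsingle : chi (Pi.single i 1) x = -1 := by
    unfold chi
    have hs : (∑ j, (Pi.single i 1 : Fin n → ZMod 2) j * x j) = x i := by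
      simp [Pi.single_apply, ite_mul]
    rw [hs, hxi]
    rw [show (1 : ZMod 2).val = 1 from rfl]; norm_num
  have key : ∀ ξ, chi (ξ + Pi.single i 1) x = - chi ξ x := by
    intro ξ
    calc chi (ξ + Pi.single i 1) x = chi x (ξ + Pi.single i 1) := chi_comm _ _
      _ = chi x ξ * chi x (Pi.single i 1) := chi_add_right _ _ _
      _ = chi ξ x * chi (Pi.single i 1) x := by rw [chi_comm x ξ, chi_comm x]
      _ = - chi ξ x := by rw [hsingle]; ring
  have h2 : ∑ ξ, chi ξ x = ∑ ξ, chi (ξ + Pi.single i 1) x :=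
    (Fintype.sum_equiv (Equiv.addRight (Pi.single i 1)) _ _ (fun ξ => rfl)).symm
  have h3 : ∑ ξ, chi ξ x = - ∑ ξ, chi ξ x := by
    calc ∑ ξ, chi ξ x = ∑ ξ, chi (ξ + Pi.single i 1) x := h2
      _ = ∑ ξ, - chi ξ x := Finset.sum_congr rfl fun ξ _ => key ξ
      _ = - ∑ ξ, chi ξ x := by rw [Finset.sum_neg_distrib]
  linarith

lemma sum_chi_right_eq (x : Fin n → ZMod 2) :
    ∑ ξ, chi ξ x = if x = 0 then (2 ^ n : ℝ) else 0 := by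
  split_ifs with h
  · subst h
    simp [chi_zero_right, Finset.card_univ]
  · exact sum_chi_right h


/-- The dot-product linear functional. -/
def dotL (ξ : Fin n → ZMod 2) : (Fin n → ZMod 2) →ₗ[ZMod 2] ZMod 2 where
  toFun x := ∑ i, ξ i * x i
  map_add' x y := by simp [mul_add, Finset.sum_add_distrib]
  map_smul' c x := by simp [Finset.mul_sum, mul_left_comm c]

lemma pi_neg_eq (y : Fin n → ZMod 2) : -y = y :=
  funext fun i => CharTwo.neg_eq (y i)

lemma pi_add_eq_zero_iff (x y : Fin n → ZMod 2) : x + y = 0 ↔ x = y := by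
  rw [add_eq_zero_iff_eq_neg, pi_neg_eq]

lemma sum_F_sq (A : Finset (Fin n → ZMod 2)) :
    ∑ ξ, (∑ a ∈ A, chi ξ a) ^ 2 = 2 ^ n * A.card := by
  calc ∑ ξ, (∑ a ∈ A, chi ξ a) ^ 2
      = ∑ ξ, ∑ a ∈ A, ∑ b ∈ A, chi ξ (a + b) := by
        refine Finset.sum_congr rfl fun ξ _ => ?_
        rw [sq, Finset.sum_mul_sum]
        exact Finset.sum_congr rfl fun a _ => Finset.sum_congr rfl fun b _ =>
          (chi_add_right _ _ _).symm
    _ = ∑ a ∈ A, ∑ ξ, ∑ b ∈ A, chi ξ (a + b) := Finset.sum_comm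
    _ = ∑ a ∈ A, ∑ b ∈ A, ∑ ξ, chi ξ (a + b) :=
        Finset.sum_congr rfl fun a _ => Finset.sum_comm
    _ = ∑ a ∈ A, ∑ b ∈ A, (if b = a then (2 ^ n : ℝ) else 0) := by
        refine Finset.sum_congr rfl fun a _ => Finset.sum_congr rfl fun b _ => ?_
        rw [sum_chi_right_eq]
        exact if_congr (by rw [pi_add_eq_zero_iff]; exact eq_comm) rfl rfl
    _ = ∑ _a ∈ A, (2 ^ n : ℝ) :=
        Finset.sum_congr rfl fun a ha => by
          rw [Finset.sum_ite_eq' A a (fun _ => (2 ^ n : ℝ)), if_pos ha]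
    _ = 2 ^ n * A.card := by rw [Finset.sum_const, nsmul_eq_mul, mul_comm]

lemma sum_F_pow4 (A : Finset (Fin n → ZMod 2)) (x : Fin n → ZMod 2) :
    ∑ ξ, (∑ a ∈ A, chi ξ a) ^ 4 * chi ξ x
      = ∑ a ∈ A, ∑ b ∈ A, ∑ c ∈ A, ∑ d ∈ A,
          (if a + b + c + d = x then (2 ^ n : ℝ) else 0) := by
  calc ∑ ξ, (∑ a ∈ A, chi ξ a) ^ 4 * chi ξ x
      = ∑ ξ, ∑ a ∈ A, ∑ b ∈ A, ∑ c ∈ A, ∑ d ∈ A, chi ξ (a + b + c + d + x) := by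
        refine Finset.sum_congr rfl fun ξ _ => ?_
        rw [show (4 : ℕ) = 2 + 2 from rfl, pow_add, sq]
        simp only [Finset.sum_mul, Finset.mul_sum]
        refine Finset.sum_congr rfl fun a _ => Finset.sum_congr rfl fun b _ =>
          Finset.sum_congr rfl fun c _ => Finset.sum_congr rfl fun d _ => ?_
        rw [chi_add_right, chi_add_right, chi_add_right, chi_add_right]
        ring
    _ = ∑ a ∈ A, ∑ ξ, ∑ b ∈ A, ∑ c ∈ A, ∑ d ∈ A, chi ξ (a + b + c + d + x) :=
        Finset.sum_comm
    _ = ∑ a ∈ A, ∑ b ∈ A, ∑ ξ, ∑ c ∈ A, ∑ d ∈ A, chi ξ (a + b + c + d + x) :=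
        Finset.sum_congr rfl fun _ _ => Finset.sum_comm
    _ = ∑ a ∈ A, ∑ b ∈ A, ∑ c ∈ A, ∑ ξ, ∑ d ∈ A, chi ξ (a + b + c + d + x) :=
        Finset.sum_congr rfl fun _ _ => Finset.sum_congr rfl fun _ _ => Finset.sum_comm
    _ = ∑ a ∈ A, ∑ b ∈ A, ∑ c ∈ A, ∑ d ∈ A, ∑ ξ, chi ξ (a + b + c + d + x) :=
        Finset.sum_congr rfl fun _ _ => Finset.sum_congr rfl fun _ _ =>
          Finset.sum_congr rfl fun _ _ => Finset.sum_comm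
    _ = ∑ a ∈ A, ∑ b ∈ A, ∑ c ∈ A, ∑ d ∈ A,
          (if a + b + c + d = x then (2 ^ n : ℝ) else 0) := by
        refine Finset.sum_congr rfl fun a _ => Finset.sum_congr rfl fun b _ =>
          Finset.sum_congr rfl fun c _ => Finset.sum_congr rfl fun d _ => ?_
        rw [sum_chi_right_eq]
        exact if_congr (pi_add_eq_zero_iff _ _) rfl rfl

set_option maxHeartbeats 2000000 in
theorem bogolyubov (A : Finset (Fin n → ZMod 2)) (α : ℝ) (hα : 0 < α)
    (hA : α * 2 ^ n ≤ (A.card : ℝ)) :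
    ∃ V : Submodule (ZMod 2) (Fin n → ZMod 2),
      n - Module.finrank (ZMod 2) V ≤ ⌈2 / α ^ 4⌉₊ ∧
      ∀ x ∈ V, ∃ a ∈ A, ∃ b ∈ A, ∃ c ∈ A, ∃ d ∈ A, a + b + c + d = x := by
  classical
  set N : ℝ := 2 ^ n with hN
  have hN0 : (0 : ℝ) < N := by positivity
  set F : (Fin n → ZMod 2) → ℝ := fun ξ => ∑ a ∈ A, chi ξ a with hF
  set T : ℝ := α ^ 4 * N ^ 2 / 2 with hT
  have hT0 : 0 < T := by positivity
  set Spec : Finset (Fin n → ZMod 2) :=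
    Finset.univ.filter (fun ξ => ξ ≠ 0 ∧ T ≤ F ξ ^ 2) with hSpec
  have hcardA : (A.card : ℝ) ≤ N := by
    rw [hN]
    have h1 : A.card ≤ Fintype.card (Fin n → ZMod 2) := Finset.card_le_univ A
    have h2 : Fintype.card (Fin n → ZMod 2) = 2 ^ n := by
      simp [Fintype.card_fun]
    rw [h2] at h1
    exact_mod_cast h1
  have hPar : ∑ ξ, F ξ ^ 2 = N * A.card := sum_F_sq A
  have hParLe : ∑ ξ, F ξ ^ 2 ≤ N ^ 2 := by
    rw [hPar, sq]
    exact mul_le_mul_of_nonneg_left hcardA hN0.le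
  -- Spectrum size bound
  have hSpecCard : (Spec.card : ℝ) ≤ 2 / α ^ 4 := by
    have h1 : Spec.card • T ≤ ∑ ξ ∈ Spec, F ξ ^ 2 :=
      Finset.card_nsmul_le_sum Spec _ T
        (fun ξ hξ => ((Finset.mem_filter.mp hξ).2).2)
    rw [nsmul_eq_mul] at h1
    have h2 : ∑ ξ ∈ Spec, F ξ ^ 2 ≤ ∑ ξ, F ξ ^ 2 :=
      Finset.sum_le_sum_of_subset_of_nonneg (Finset.subset_univ _)
        (fun ξ _ _ => sq_nonneg _)
    have h3 : (Spec.card : ℝ) * T ≤ N ^ 2 := le_trans h1 (le_trans h2 hParLe)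
    rw [le_div_iff₀ (by positivity : (0:ℝ) < α ^ 4)]
    rw [hT] at h3
    have hN2 : (0:ℝ) < N ^ 2 := by positivity
    have h4 : ((Spec.card : ℝ) * α ^ 4) * N ^ 2 ≤ 2 * N ^ 2 := by nlinarith [h3]
    exact le_of_mul_le_mul_right h4 hN2
  have hSpecCardNat : Spec.card ≤ ⌈2 / α ^ 4⌉₊ :=
    Nat.cast_le.mp (le_trans (by exact_mod_cast hSpecCard) (Nat.le_ceil _))
  -- the subspace
  set Φ : (Fin n → ZMod 2) →ₗ[ZMod 2] (↥Spec → ZMod 2) :=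
    LinearMap.pi (fun ξ : ↥Spec => dotL (ξ : Fin n → ZMod 2)) with hΦ
  refine ⟨LinearMap.ker Φ, ?_, ?_⟩
  · have hrank := LinearMap.finrank_range_add_finrank_ker Φ
    have hdom : Module.finrank (ZMod 2) (Fin n → ZMod 2) = n := by
      simp [Module.finrank_pi]
    have hr2 : Module.finrank (ZMod 2) (LinearMap.range Φ) ≤ Spec.card := by
      have := Submodule.finrank_le (LinearMap.range Φ)
      have hcod : Module.finrank (ZMod 2) (↥Spec → ZMod 2) = Spec.card := by
        simp [Module.finrank_pi, Fintype.card_coe]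
      omega
    rw [hdom] at hrank
    omega
  · intro x hx
    have hmem : ∀ ξ ∈ Spec, (∑ i, ξ i * x i) = 0 := by
      intro ξ hξ
      have := LinearMap.mem_ker.mp hx
      have h2 := congrFun this ⟨ξ, hξ⟩
      exact h2
    have hx1 : ∀ ξ ∈ Spec, chi ξ x = 1 := fun ξ hξ => chi_eq_one_of _ _ (hmem ξ hξ)
    -- positivity of fourth moment
    have key : 0 < ∑ ξ, F ξ ^ 4 * chi ξ x := by
      have hsplit : ∑ ξ, F ξ ^ 4 * chi ξ x
          = F 0 ^ 4 * chi 0 x + ∑ ξ ∈ Finset.univ.erase 0, F ξ ^ 4 * chi ξ x :=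
        (Finset.add_sum_erase _ _ (Finset.mem_univ 0)).symm
      have hterm : ∀ ξ ∈ Finset.univ.erase 0, -(T * F ξ ^ 2) ≤ F ξ ^ 4 * chi ξ x := by
        intro ξ hξ
        have hξ0 : ξ ≠ 0 := (Finset.mem_erase.mp hξ).1
        have hF4 : (0:ℝ) ≤ F ξ ^ 4 := by positivity
        by_cases hs : ξ ∈ Spec
        · rw [hx1 ξ hs, mul_one]
          nlinarith [sq_nonneg (F ξ)]
        · have hF2le : F ξ ^ 2 ≤ T := by
            rw [hSpec] at hs
            simp only [Finset.mem_filter, Finset.mem_univ, true_and] at hs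
            push_neg at hs
            exact (hs hξ0).le
          have h1 : F ξ ^ 4 * (-1) ≤ F ξ ^ 4 * chi ξ x :=
            mul_le_mul_of_nonneg_left (neg_one_le_chi ξ x) hF4
          nlinarith [mul_le_mul_of_nonneg_right hF2le (sq_nonneg (F ξ))]
      have hsum2 : ∑ ξ ∈ Finset.univ.erase 0, -(T * F ξ ^ 2)
          ≤ ∑ ξ ∈ Finset.univ.erase 0, F ξ ^ 4 * chi ξ x := Finset.sum_le_sum hterm
      have h5 : ∑ ξ ∈ Finset.univ.erase 0, -(T * F ξ ^ 2)
          = -(T * ∑ ξ ∈ Finset.univ.erase 0, F ξ ^ 2) := by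
        rw [Finset.mul_sum, ← Finset.sum_neg_distrib]
      have h6 : ∑ ξ ∈ Finset.univ.erase 0, F ξ ^ 2 ≤ N ^ 2 :=
        le_trans (Finset.sum_le_sum_of_subset_of_nonneg (Finset.subset_univ _)
          (fun ξ _ _ => sq_nonneg _)) hParLe
      have hF0 : F 0 = A.card := by
        simp [hF, chi_zero_left]
      have hchi0 : chi (0 : Fin n → ZMod 2) x = 1 := chi_zero_left x
      have hcard4 : (α * N) ^ 4 ≤ (A.card : ℝ) ^ 4 :=
        pow_le_pow_left₀ (by positivity) hA 4
      have hTsum : -(T * ∑ ξ ∈ Finset.univ.erase 0, F ξ ^ 2) ≥ -(T * N ^ 2) := by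
        have := mul_le_mul_of_nonneg_left h6 hT0.le
        linarith
      rw [hsplit, hF0, hchi0, mul_one]
      have hfin : (A.card:ℝ) ^ 4 - T * N ^ 2 > 0 := by
        have he : (α * N) ^ 4 = α ^ 4 * N ^ 4 := by ring
        have h7 : α ^ 4 * N ^ 4 ≤ (A.card : ℝ) ^ 4 := by rw [← he]; exact hcard4
        have h8 : (0:ℝ) < α ^ 4 * N ^ 4 := by positivity
        have h9 : T * N ^ 2 = α ^ 4 * N ^ 4 / 2 := by rw [hT]; ring
        rw [h9]
        linarith
      linarith
    by_contra hcon
    push_neg at hcon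
    have hzero : ∑ a ∈ A, ∑ b ∈ A, ∑ c ∈ A, ∑ d ∈ A,
        (if a + b + c + d = x then (2 ^ n : ℝ) else 0) = 0 :=
      Finset.sum_eq_zero fun a ha => Finset.sum_eq_zero fun b hb =>
        Finset.sum_eq_zero fun c hc => Finset.sum_eq_zero fun d hd =>
          if_neg (hcon a ha b hb c hc d hd)
    simp only [hF] at key
    rw [sum_F_pow4 A x, hzero] at key
    exact lt_irrefl 0 key


lemma finrank_pi' : Module.finrank (ZMod 2) (Fin n → ZMod 2) = n := by
  simp [Module.finrank_pi]

lemma exists_submodule_le (W : Submodule (ZMod 2) (Fin n → ZMod 2)) (d : ℕ)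
    (hd : d ≤ Module.finrank (ZMod 2) W) :
    ∃ W' : Submodule (ZMod 2) (Fin n → ZMod 2), W' ≤ W ∧
      Module.finrank (ZMod 2) W' = d := by
  obtain ⟨f, hf⟩ := exists_linearIndependent_of_le_finrank (R := ZMod 2) (M := ↥W) hd
  have hinj : LinearIndependent (ZMod 2) (fun i => ((f i : Fin n → ZMod 2))) :=
    hf.map' W.subtype (Submodule.ker_subtype W)
  refine ⟨Submodule.span (ZMod 2) (Set.range fun i => (f i : Fin n → ZMod 2)), ?_, ?_⟩
  · rw [Submodule.span_le]; rintro _ ⟨i, rfl⟩; exact (f i).2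
  · rw [finrank_span_eq_card hinj, Fintype.card_fin]

lemma finrank_inf (W₁ W₂ : Submodule (ZMod 2) (Fin n → ZMod 2)) :
    Module.finrank (ZMod 2) W₁ + Module.finrank (ZMod 2) W₂
      ≤ n + Module.finrank (ZMod 2) ↥(W₁ ⊓ W₂) := by
  have h := Submodule.finrank_sup_add_finrank_inf_eq W₁ W₂
  have h2 : Module.finrank (ZMod 2) ↥(W₁ ⊔ W₂) ≤ n :=
    le_trans (Submodule.finrank_le _) (le_of_eq finrank_pi')
  omega


end Stmt8Aux

/-- `M ∈ cℬ'`: `M` is a sum of at most `c` rank-one matrices `u ⊗ v` with `(u, v) ∈ ℬ'`. -/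
def IsSumAtMost (n₁ n₂ c : ℕ) (B' : Finset ((Fin n₁ → ZMod 2) × (Fin n₂ → ZMod 2)))
    (M : Matrix (Fin n₁) (Fin n₂) (ZMod 2)) : Prop :=
  ∃ s : Multiset ((Fin n₁ → ZMod 2) × (Fin n₂ → ZMod 2)),
    Multiset.card s ≤ c ∧ (∀ p ∈ s, p ∈ B') ∧
    M = (s.map (fun p => Matrix.vecMulVec p.1 p.2)).sum

open Stmt8Aux in
set_option maxHeartbeats 2000000 in
theorem stmt8 (δ : ℝ) (hδ : 0 < δ) :
    ∃ k : ℕ, 0 < k ∧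
      ∀ n₁ n₂ : ℕ, 0 < n₁ → 0 < n₂ →
        ∀ B' : Finset ((Fin n₁ → ZMod 2) × (Fin n₂ → ZMod 2)),
          δ * 2 ^ (n₁ + n₂) ≤ (B'.card : ℝ) →
          ∃ U : Submodule (ZMod 2) (Fin n₁ → ZMod 2),
            n₁ - Module.finrank (ZMod 2) U ≤ k ∧
            ∃ V : (Fin n₁ → ZMod 2) → Submodule (ZMod 2) (Fin n₂ → ZMod 2),
              (∀ u ∈ U, n₂ - Module.finrank (ZMod 2) (V u) ≤ k) ∧
              (∀ u ∈ U, ∀ u' ∈ U,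
                Module.finrank (ZMod 2) (V u) = Module.finrank (ZMod 2) (V u')) ∧
              ∀ u ∈ U, ∀ v ∈ V u, IsSumAtMost n₁ n₂ 16 B' (Matrix.vecMulVec u v) := by
  classical
  set α : ℝ := δ / 2 with hαdef
  have hα : 0 < α := by positivity
  set K : ℕ := ⌈2 / α ^ 4⌉₊ with hK
  refine ⟨4 * K + 1, Nat.succ_pos _, ?_⟩
  intro n₁ n₂ hn₁ hn₂ B' hB'
  set fib : (Fin n₁ → ZMod 2) → Finset (Fin n₂ → ZMod 2) :=
    fun u => (B'.filter (fun p => p.1 = u)).image Prod.snd with hfibdef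
  have hfib_mem : ∀ u v, v ∈ fib u → (u, v) ∈ B' := by
    intro u v hv
    obtain ⟨p, hp, hpv⟩ := Finset.mem_image.mp hv
    obtain ⟨hpB, hpu⟩ := Finset.mem_filter.mp hp
    have : (u, v) = p := by rw [← hpu, ← hpv]
    rwa [this]
  have hfibcard : ∀ u, (B'.filter (fun p => p.1 = u)).card = (fib u).card := by
    intro u
    rw [hfibdef]
    refine (Finset.card_image_of_injOn ?_).symm
    intro p hp q hq hpq
    have h1 := (Finset.mem_filter.mp hp).2
    have h2 := (Finset.mem_filter.mp hq).2
    exact Prod.ext (h1.trans h2.symm) hpq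
  have hcard_fun₂ : Fintype.card (Fin n₂ → ZMod 2) = 2 ^ n₂ := by simp [Fintype.card_fun]
  have hcard_fun₁ : Fintype.card (Fin n₁ → ZMod 2) = 2 ^ n₁ := by simp [Fintype.card_fun]
  have hfib_bound : ∀ u, ((fib u).card : ℝ) ≤ 2 ^ n₂ := by
    intro u
    have := (Finset.card_le_univ (fib u)).trans_eq hcard_fun₂
    exact_mod_cast this
  -- the dense set of rows
  set A : Finset (Fin n₁ → ZMod 2) :=
    Finset.univ.filter (fun u => α * 2 ^ n₂ ≤ ((fib u).card : ℝ)) with hAdef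
  have hAcard : α * 2 ^ n₁ ≤ (A.card : ℝ) := by
    have hsum : (B'.card : ℝ) = ∑ u, ((B'.filter (fun p => p.1 = u)).card : ℝ) := by
      rw [Finset.card_eq_sum_card_fiberwise
        (f := Prod.fst) (t := Finset.univ) (fun p _ => Finset.mem_univ p.1)]
      push_cast
      rfl
    have hsplit := Finset.sum_filter_add_sum_filter_not Finset.univ
      (fun u => α * 2 ^ n₂ ≤ ((fib u).card : ℝ))
      (fun u => ((B'.filter (fun p => p.1 = u)).card : ℝ))
    have hb1 : ∑ u ∈ A, ((B'.filter (fun p => p.1 = u)).card : ℝ)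
        ≤ (A.card : ℝ) * 2 ^ n₂ := by
      calc ∑ u ∈ A, ((B'.filter (fun p => p.1 = u)).card : ℝ)
          ≤ ∑ _u ∈ A, (2:ℝ) ^ n₂ := Finset.sum_le_sum fun u _ => by
            rw [hfibcard u]; exact hfib_bound u
        _ = (A.card : ℝ) * 2 ^ n₂ := by rw [Finset.sum_const, nsmul_eq_mul]
    have hb2 : ∑ u ∈ Finset.univ.filter (fun u => ¬ (α * 2 ^ n₂ ≤ ((fib u).card : ℝ))),
        ((B'.filter (fun p => p.1 = u)).card : ℝ) ≤ 2 ^ n₁ * (α * 2 ^ n₂) := by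
      calc ∑ u ∈ Finset.univ.filter (fun u => ¬ (α * 2 ^ n₂ ≤ ((fib u).card : ℝ))),
            ((B'.filter (fun p => p.1 = u)).card : ℝ)
          ≤ ∑ _u ∈ Finset.univ.filter (fun u => ¬ (α * 2 ^ n₂ ≤ ((fib u).card : ℝ))),
            (α * 2 ^ n₂) := Finset.sum_le_sum fun u hu => by
              rw [hfibcard u]
              exact le_of_not_ge (Finset.mem_filter.mp hu).2
        _ = ((Finset.univ.filter
              (fun u => ¬ (α * 2 ^ n₂ ≤ ((fib u).card : ℝ)))).card : ℝ) * (α * 2 ^ n₂) := by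
            rw [Finset.sum_const, nsmul_eq_mul]
        _ ≤ 2 ^ n₁ * (α * 2 ^ n₂) := by
            refine mul_le_mul_of_nonneg_right ?_ (by positivity)
            have := (Finset.card_le_univ (Finset.univ.filter
              (fun u => ¬ (α * 2 ^ n₂ ≤ ((fib u).card : ℝ))))).trans_eq hcard_fun₁
            exact_mod_cast this
    have hBle : (B'.card : ℝ) ≤ (A.card : ℝ) * 2 ^ n₂ + 2 ^ n₁ * (α * 2 ^ n₂) := by
      rw [hsum, ← hsplit]
      exact add_le_add hb1 hb2
    have hP2 : (0:ℝ) < 2 ^ n₂ := by positivity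
    have hB'' : δ * (2 ^ n₁ * 2 ^ n₂) ≤ (B'.card : ℝ) := by
      rw [← pow_add]; exact hB'
    have hα2 : δ = 2 * α := by rw [hαdef]; ring
    rw [hα2] at hB''
    have hkey : (α * 2 ^ n₁) * 2 ^ n₂ ≤ (A.card : ℝ) * 2 ^ n₂ := by linarith
    exact le_of_mul_le_mul_right hkey hP2
  obtain ⟨U, hUcodim, hU4⟩ := bogolyubov A α hα hAcard
  -- subspaces for dense rows
  have hW : ∀ u : Fin n₁ → ZMod 2, ∃ W : Submodule (ZMod 2) (Fin n₂ → ZMod 2),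
      u ∈ A → (n₂ - Module.finrank (ZMod 2) W ≤ K ∧
        ∀ v ∈ W, ∃ p ∈ fib u, ∃ q ∈ fib u, ∃ r ∈ fib u, ∃ s ∈ fib u,
          p + q + r + s = v) := by
    intro u
    by_cases hu : u ∈ A
    · have hdense : α * 2 ^ n₂ ≤ ((fib u).card : ℝ) := (Finset.mem_filter.mp hu).2
      obtain ⟨W, h1, h2⟩ := bogolyubov (fib u) α hα hdense
      exact ⟨W, fun _ => ⟨h1, h2⟩⟩
    · exact ⟨⊤, fun h => absurd h hu⟩
  choose W hWspec using hW
  -- candidate subspaces for every u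
  have hV' : ∀ u : Fin n₁ → ZMod 2, ∃ V : Submodule (ZMod 2) (Fin n₂ → ZMod 2),
      Module.finrank (ZMod 2) V = n₂ - 4 * K ∧
      (u ∈ U → ∀ v ∈ V, IsSumAtMost n₁ n₂ 16 B' (Matrix.vecMulVec u v)) := by
    intro u
    by_cases hu : u ∈ U
    · obtain ⟨a, ha, b, hb, c, hc, d, hd, habcd⟩ := hU4 u hu
      set V0 : Submodule (ZMod 2) (Fin n₂ → ZMod 2) := W a ⊓ W b ⊓ W c ⊓ W d with hV0
      have hra := (hWspec a ha).1
      have hrb := (hWspec b hb).1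
      have hrc := (hWspec c hc).1
      have hrd := (hWspec d hd).1
      have i1 := finrank_inf (W a) (W b)
      have i2 := finrank_inf (W a ⊓ W b) (W c)
      have i3 := finrank_inf (W a ⊓ W b ⊓ W c) (W d)
      have hwa : Module.finrank (ZMod 2) (W a) ≤ n₂ :=
        le_trans (Submodule.finrank_le _) (le_of_eq finrank_pi')
      have hwb : Module.finrank (ZMod 2) (W b) ≤ n₂ :=
        le_trans (Submodule.finrank_le _) (le_of_eq finrank_pi')
      have hwc : Module.finrank (ZMod 2) (W c) ≤ n₂ :=
        le_trans (Submodule.finrank_le _) (le_of_eq finrank_pi')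
      have hwd : Module.finrank (ZMod 2) (W d) ≤ n₂ :=
        le_trans (Submodule.finrank_le _) (le_of_eq finrank_pi')
      have hrank : n₂ - 4 * K ≤ Module.finrank (ZMod 2) V0 := by
        rw [hV0]; omega
      obtain ⟨V, hVle, hVrank⟩ := exists_submodule_le V0 (n₂ - 4 * K) hrank
      refine ⟨V, hVrank, fun _ v hv => ?_⟩
      have hv0 : v ∈ V0 := hVle hv
      have hva : v ∈ W a := by
        have := hv0; rw [hV0] at this
        exact (le_trans inf_le_left (le_trans inf_le_left inf_le_left) : V0 ≤ W a) hv0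
      have hvb : v ∈ W b :=
        (le_trans inf_le_left (le_trans inf_le_left inf_le_right) : V0 ≤ W b) hv0
      have hvc : v ∈ W c :=
        (le_trans inf_le_left inf_le_right : V0 ≤ W c) hv0
      have hvd : v ∈ W d := (inf_le_right : V0 ≤ W d) hv0
      obtain ⟨a₁, ha₁, a₂, ha₂, a₃, ha₃, a₄, ha₄, hsa⟩ := (hWspec a ha).2 v hva
      obtain ⟨b₁, hb₁, b₂, hb₂, b₃, hb₃, b₄, hb₄, hsb⟩ := (hWspec b hb).2 v hvb
      obtain ⟨c₁, hc₁, c₂, hc₂, c₃, hc₃, c₄, hc₄, hsc⟩ := (hWspec c hc).2 v hvc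
      obtain ⟨d₁, hd₁, d₂, hd₂, d₃, hd₃, d₄, hd₄, hsd⟩ := (hWspec d hd).2 v hvd
      refine ⟨↑[(a,a₁),(a,a₂),(a,a₃),(a,a₄),(b,b₁),(b,b₂),(b,b₃),(b,b₄),
        (c,c₁),(c,c₂),(c,c₃),(c,c₄),(d,d₁),(d,d₂),(d,d₃),(d,d₄)], by simp, ?_, ?_⟩
      · intro p hp
        simp only [Multiset.mem_coe, List.mem_cons, List.not_mem_nil, or_false] at hp
        rcases hp with rfl|rfl|rfl|rfl|rfl|rfl|rfl|rfl|rfl|rfl|rfl|rfl|rfl|rfl|rfl|rfl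
        · exact hfib_mem a a₁ ha₁
        · exact hfib_mem a a₂ ha₂
        · exact hfib_mem a a₃ ha₃
        · exact hfib_mem a a₄ ha₄
        · exact hfib_mem b b₁ hb₁
        · exact hfib_mem b b₂ hb₂
        · exact hfib_mem b b₃ hb₃
        · exact hfib_mem b b₄ hb₄
        · exact hfib_mem c c₁ hc₁
        · exact hfib_mem c c₂ hc₂
        · exact hfib_mem c c₃ hc₃
        · exact hfib_mem c c₄ hc₄
        · exact hfib_mem d d₁ hd₁
        · exact hfib_mem d d₂ hd₂
        · exact hfib_mem d d₃ hd₃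
        · exact hfib_mem d d₄ hd₄
      · apply Matrix.ext
        intro i j
        simp only [Multiset.map_coe, List.map_cons, List.map_nil, Multiset.sum_coe,
          List.sum_cons, List.sum_nil, add_zero, Matrix.add_apply, Matrix.vecMulVec_apply]
        have hui := congrFun habcd i
        have hja := congrFun hsa j
        have hjb := congrFun hsb j
        have hjc := congrFun hsc j
        have hjd := congrFun hsd j
        simp only [Pi.add_apply] at hui hja hjb hjc hjd
        linear_combination (-(v j)) * hui - (a i) * hja - (b i) * hjb
          - (c i) * hjc - (d i) * hjd
    · obtain ⟨V, _, hVrank⟩ := exists_submodule_le (⊤ : Submodule (ZMod 2) (Fin n₂ → ZMod 2))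
        (n₂ - 4 * K) (by rw [finrank_top, finrank_pi']; exact Nat.sub_le _ _)
      exact ⟨V, hVrank, fun h => absurd h hu⟩
  choose V hVrank hVsum using hV'
  refine ⟨U, le_trans hUcodim (by omega), V, ?_, ?_, ?_⟩
  · intro u _
    rw [hVrank u]
    omega
  · intro u _ u' _
    rw [hVrank u, hVrank u']
  · intro u hu v hv
    exact hVsum u hu v hv
end

section
/- For every positive integer k there exist a real number ρ > 0 and a positive integer L, both depending only on k, with the following property. Let n_1, n_2 be positive integers, let U ⊆ F_2^{n_1} be a subspace of codimension at most k, and for each u ∈ U let V_u ⊆ F_2^{n_2} be a subspace of codimension at most k, with all the V_u having the same codimension. Let Q be the multiset of matrices u⊗v indexed by pairs (u,v) with u ∈ U and v ∈ V_u. Let m = 2^{k+3} and let r_1,…,r_m ∈ 𝒢 be such that for every i ≤ m there are at least (3/4)|Q| pairs (u,v), with u ∈ U and v ∈ V_u, satisfying r_i·(u⊗v) = 0. Then there exist i ≠ j such that |{w ∈ F_2^{n_1} : (r_i−r_j)w = 0}| ≥ ρ·2^{n_1}; in particular, the matrix r_i−r_j has rank at most L. -/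
/-- The entrywise dot product of two matrices over `F_2`. -/
def matDot (n₁ n₂ : ℕ) (r q : Matrix (Fin n₁) (Fin n₂) (ZMod 2)) : ZMod 2 :=
  ∑ i, ∑ j, r i j * q i j

/-- The subspace `W ⊗ F_2^{n₂}` of matrices all of whose columns lie in `W`. -/
def colCyl (n₁ n₂ : ℕ) (W : Submodule (ZMod 2) (Fin n₁ → ZMod 2)) :
    Submodule (ZMod 2) (Matrix (Fin n₁) (Fin n₂) (ZMod 2)) where
  carrier := {r | ∀ j, (fun i => r i j) ∈ W}
  add_mem' := fun ha hb j => W.add_mem (ha j) (hb j)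
  zero_mem' := fun j => W.zero_mem
  smul_mem' := fun c _ hr j => W.smul_mem c (hr j)

/-- The subspace `F_2^{n₁} ⊗ W` of matrices all of whose rows lie in `W`. -/
def rowCyl (n₁ n₂ : ℕ) (W : Submodule (ZMod 2) (Fin n₂ → ZMod 2)) :
    Submodule (ZMod 2) (Matrix (Fin n₁) (Fin n₂) (ZMod 2)) where
  carrier := {r | ∀ i, (fun j => r i j) ∈ W}
  add_mem' := fun ha hb i => W.add_mem (ha i) (hb i)
  zero_mem' := fun i => W.zero_mem
  smul_mem' := fun c _ hr i => W.smul_mem c (hr i)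

/-- The number of pairs `(u, v)` indexing the multiset `Q = {u ⊗ v : u ∈ U, v ∈ V_u}`
that satisfy the predicate `p`. -/
noncomputable def qCount (n₁ n₂ : ℕ) (U : Submodule (ZMod 2) (Fin n₁ → ZMod 2))
    (V : (Fin n₁ → ZMod 2) → Submodule (ZMod 2) (Fin n₂ → ZMod 2))
    (p : (Fin n₁ → ZMod 2) → (Fin n₂ → ZMod 2) → Prop) : ℕ :=
  Set.ncard {q : (Fin n₁ → ZMod 2) × (Fin n₂ → ZMod 2) |
    q.1 ∈ U ∧ q.2 ∈ V q.1 ∧ p q.1 q.2}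


open Finset Module

/-- dot product as a linear map into the dual. -/
noncomputable def dotL (n : ℕ) : (Fin n → ZMod 2) →ₗ[ZMod 2] Module.Dual (ZMod 2) (Fin n → ZMod 2) where
  toFun x :=
    { toFun := fun v => dotProduct x v
      map_add' := fun a b => dotProduct_add x a b
      map_smul' := fun c a => by simp [dotProduct_smul] }
  map_add' := fun a b => by ext v; simp [add_dotProduct]
  map_smul' := fun c a => by ext v; simp [smul_dotProduct]

lemma dotL_inj (n : ℕ) : Function.Injective (dotL n) := by
  rw [← LinearMap.ker_eq_bot, LinearMap.ker_eq_bot']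
  intro x hx
  funext i
  have := congrFun (congrArg (fun f => f.toFun) hx) (Pi.single i 1)
  simpa [dotL, dotProduct_single] using this

/-- The "orthogonal complement" of V. -/
noncomputable def orthW (n : ℕ) (V : Submodule (ZMod 2) (Fin n → ZMod 2)) :
    Submodule (ZMod 2) (Fin n → ZMod 2) :=
  Submodule.comap (dotL n) V.dualAnnihilator

lemma mem_orthW (n : ℕ) (V : Submodule (ZMod 2) (Fin n → ZMod 2)) (x : Fin n → ZMod 2) :
    x ∈ orthW n V ↔ ∀ v ∈ V, dotProduct x v = 0 := by
  simp [orthW, Submodule.mem_dualAnnihilator, dotL]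

lemma finrank_orthW_le (n k : ℕ) (V : Submodule (ZMod 2) (Fin n → ZMod 2))
    (h : n - finrank (ZMod 2) V ≤ k) : finrank (ZMod 2) (orthW n V) ≤ k := by
  have hann : finrank (ZMod 2) V.dualAnnihilator = n - finrank (ZMod 2) V := by
    have h1 : finrank (ZMod 2) ((Fin n → ZMod 2) ⧸ V) = finrank (ZMod 2) V.dualAnnihilator :=
      LinearEquiv.finrank_eq (Subspace.quotEquivAnnihilator V)
    have h2 := Submodule.finrank_quotient_add_finrank (R := ZMod 2) V
    have h3 : finrank (ZMod 2) (Fin n → ZMod 2) = n := by simp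
    omega
  have hmap : Submodule.map (dotL n) (orthW n V) ≤ V.dualAnnihilator :=
    Submodule.map_comap_le _ _
  have := Submodule.finrank_mono hmap
  have heq : finrank (ZMod 2) (orthW n V) =
      finrank (ZMod 2) (Submodule.map (dotL n) (orthW n V)) :=
    LinearEquiv.finrank_eq (Submodule.equivMapOfInjective _ (dotL_inj n) _)
  omega

/-- card of a submodule over F2. -/
lemma card_submodule {m : Type*} [Fintype m] [DecidableEq m]
    (W : Submodule (ZMod 2) (m → ZMod 2)) :
    Nat.card W = 2 ^ finrank (ZMod 2) W := by
  classical
  rw [Nat.card_eq_fintype_card, card_eq_pow_finrank (K := ZMod 2)]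
  simp [ZMod.card]

open Matrix in
lemma half_card (n : ℕ) (V : Submodule (ZMod 2) (Fin n → ZMod 2)) (x : Fin n → ZMod 2)
    [DecidablePred (· ∈ V)] (h : ¬ ∀ v ∈ V, dotProduct x v = 0) :
    2 * #{v ∈ univ | v ∈ V ∧ dotProduct x v = 0}
      = #{v ∈ univ | v ∈ V} := by
  push_neg at h
  obtain ⟨v₀, hv₀V, hv₀⟩ := h
  have hone : dotProduct x v₀ = 1 := by
    have h2 : ∀ a : ZMod 2, a ≠ 0 → a = 1 := by decide
    exact h2 _ hv₀
  have hcanc : ∀ y : Fin n → ZMod 2, y + v₀ + v₀ = y := by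
    intro y; funext j
    have : ∀ a b : ZMod 2, a + b + b = a := by decide
    exact this _ _
  have hbij : #{v ∈ univ | v ∈ V ∧ dotProduct x v = 0}
      = #{v ∈ univ | v ∈ V ∧ ¬ dotProduct x v = 0} := by
    apply Finset.card_nbij' (fun v => v + v₀) (fun v => v + v₀)
    · intro a ha
      simp only [Finset.mem_coe, mem_filter, mem_univ, true_and] at ha ⊢
      refine ⟨V.add_mem ha.1 hv₀V, ?_⟩
      rw [dotProduct_add, ha.2, hone]
      decide
    · intro a ha
      simp only [Finset.mem_coe, mem_filter, mem_univ, true_and] at ha ⊢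
      have h2 : ∀ a : ZMod 2, a ≠ 0 → a = 1 := by decide
      refine ⟨V.add_mem ha.1 hv₀V, ?_⟩
      rw [dotProduct_add, h2 _ ha.2, hone]
      decide
    · intro a _; exact hcanc a
    · intro a _; exact hcanc a
  have hsplit : #{v ∈ univ | v ∈ V ∧ dotProduct x v = 0}
      + #{v ∈ univ | v ∈ V ∧ ¬ dotProduct x v = 0}
      = #{v ∈ univ | v ∈ V} := by
    rw [← Finset.filter_filter, ← Finset.filter_filter,
      Finset.card_filter_add_card_filter_not]
  omega

lemma qCount_eq (n₁ n₂ : ℕ) (U : Submodule (ZMod 2) (Fin n₁ → ZMod 2))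
    (V : (Fin n₁ → ZMod 2) → Submodule (ZMod 2) (Fin n₂ → ZMod 2))
    (p : (Fin n₁ → ZMod 2) → (Fin n₂ → ZMod 2) → Prop)
    [DecidablePred (· ∈ U)] [∀ u, DecidablePred (· ∈ V u)] [∀ u, DecidablePred (p u)] :
    qCount n₁ n₂ U V p
      = ∑ u ∈ {u ∈ univ | u ∈ U}, #{v ∈ univ | v ∈ V u ∧ p u v} := by
  have h1 : qCount n₁ n₂ U V p
      = #(univ.filter fun q : (Fin n₁ → ZMod 2) × (Fin n₂ → ZMod 2) =>
          q.1 ∈ U ∧ q.2 ∈ V q.1 ∧ p q.1 q.2) := by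
    rw [qCount]
    rw [show (Set.ncard {q : (Fin n₁ → ZMod 2) × (Fin n₂ → ZMod 2) |
        q.1 ∈ U ∧ q.2 ∈ V q.1 ∧ p q.1 q.2}) = Nat.card {q : (Fin n₁ → ZMod 2) × (Fin n₂ → ZMod 2) |
        q.1 ∈ U ∧ q.2 ∈ V q.1 ∧ p q.1 q.2} from rfl]
    rw [Nat.card_eq_fintype_card]
    exact Fintype.card_subtype _
  rw [h1, Finset.card_filter, Fintype.sum_prod_type, Finset.sum_filter]
  apply Finset.sum_congr rfl
  intro u _
  by_cases hu : u ∈ U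
  · simp only [hu, if_true, true_and, Finset.card_filter]
  · simp [hu]

lemma card_filter_mem {n : ℕ} (W : Submodule (ZMod 2) (Fin n → ZMod 2))
    [DecidablePred (· ∈ W)] :
    #{v ∈ (univ : Finset (Fin n → ZMod 2)) | v ∈ W} = 2 ^ finrank (ZMod 2) W := by
  rw [← Fintype.card_subtype, ← Nat.card_eq_fintype_card]
  exact card_submodule W

lemma matDot_vecMulVec (n₁ n₂ : ℕ) (M : Matrix (Fin n₁) (Fin n₂) (ZMod 2))
    (u : Fin n₁ → ZMod 2) (v : Fin n₂ → ZMod 2) :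
    matDot n₁ n₂ M (Matrix.vecMulVec u v)
      = dotProduct (Matrix.vecMul u M) v := by
  rw [matDot, Finset.sum_comm]
  simp only [Matrix.vecMulVec_apply, dotProduct, Matrix.vecMul, dotProduct]
  exact Finset.sum_congr rfl fun j _ => by rw [Finset.sum_mul]; exact Finset.sum_congr rfl fun i _ => by ring

lemma ncard_eq_card_filter {α : Type*} [Fintype α] (P : α → Prop) [DecidablePred P] :
    Set.ncard {x | P x} = #{x ∈ univ | P x} := by
  rw [show Set.ncard {x | P x} = Nat.card {x | P x} from rfl, Nat.card_eq_fintype_card]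
  exact Fintype.card_subtype _

theorem stmt10 (k : ℕ) (hk : 0 < k) :
    ∃ ρ : ℝ, 0 < ρ ∧ ∃ L : ℕ, 0 < L ∧
      ∀ n₁ n₂ : ℕ, 0 < n₁ → 0 < n₂ →
        ∀ U : Submodule (ZMod 2) (Fin n₁ → ZMod 2), n₁ - Module.finrank (ZMod 2) U ≤ k →
          ∀ V : (Fin n₁ → ZMod 2) → Submodule (ZMod 2) (Fin n₂ → ZMod 2),
            (∀ u ∈ U, n₂ - Module.finrank (ZMod 2) (V u) ≤ k) →
            (∀ u ∈ U, ∀ u' ∈ U,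
              Module.finrank (ZMod 2) (V u) = Module.finrank (ZMod 2) (V u')) →
            ∀ r : Fin (2 ^ (k + 3)) → Matrix (Fin n₁) (Fin n₂) (ZMod 2),
              (∀ i, (3 / 4 : ℝ) * qCount n₁ n₂ U V (fun _ _ => True) ≤
                (qCount n₁ n₂ U V
                  (fun u v => matDot n₁ n₂ (r i) (Matrix.vecMulVec u v) = 0) : ℝ)) →
              ∃ i j, i ≠ j ∧
                ρ * 2 ^ n₁ ≤
                  (Set.ncard {w : Fin n₁ → ZMod 2 |
                    Matrix.vecMul w (r i - r j) = 0} : ℝ) ∧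
                (r i - r j).rank ≤ L := by
  classical
  refine ⟨(1/2) ^ (3*k+9), by positivity, 3*k+9, by omega, ?_⟩
  intro n₁ n₂ hn₁ hn₂ U hU V hV hVeq r hr
  have hmpos : 0 < 2^(k+3) := by positivity
  set UF : Finset (Fin n₁ → ZMod 2) := {u ∈ univ | u ∈ U} with hUF
  set N : ℕ := 2 ^ finrank (ZMod 2) (V 0) with hN
  have hNpos : 0 < N := by positivity
  have hVcard : ∀ u ∈ UF, #{v ∈ univ | v ∈ V u} = N := by
    intro u hu
    rw [card_filter_mem, hN, hVeq u (by simpa [hUF] using hu) 0 U.zero_mem]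
  have hUFcard : #UF = 2 ^ finrank (ZMod 2) U := card_filter_mem U
  have hUFpos : 1 ≤ #UF := Finset.card_pos.mpr ⟨0, by simp [hUF, U.zero_mem]⟩
  set B : Fin (2^(k+3)) → Finset (Fin n₁ → ZMod 2) :=
    fun i => {u ∈ UF | ∀ v ∈ V u, dotProduct (Matrix.vecMul u (r i)) v = 0} with hB
  have hBsub : ∀ i, B i ⊆ UF := fun i => Finset.filter_subset _ _
  set c : (Fin n₁ → ZMod 2) → Fin (2^(k+3)) → ℕ := fun u i =>
    #{v ∈ univ | v ∈ V u ∧ dotProduct (Matrix.vecMul u (r i)) v = 0} with hc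
  -- rewrite the two qCounts
  have hQtot : qCount n₁ n₂ U V (fun _ _ => True) = N * #UF := by
    rw [qCount_eq]
    rw [Finset.sum_congr rfl (fun u hu => by
      simp only [and_true]
      exact hVcard u hu)]
    rw [Finset.sum_const, smul_eq_mul, mul_comm]
  have hZ : ∀ i, qCount n₁ n₂ U V
      (fun u v => matDot n₁ n₂ (r i) (Matrix.vecMulVec u v) = 0) = ∑ u ∈ UF, c u i := by
    intro i
    rw [qCount_eq]
    simp only [matDot_vecMulVec]
    rfl
  -- step 1 : each B i is at least half of UF
  have hBineq : ∀ i, #UF ≤ 2 * #(B i) := by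
    intro i
    have hc_le : ∀ u ∈ UF, c u i ≤ N := by
      intro u hu
      rw [← hVcard u hu]
      apply Finset.card_le_card
      intro x hx
      simp only [mem_filter, mem_univ, true_and] at hx ⊢
      exact hx.1
    have hsum2 : 2 * (∑ u ∈ UF, c u i) ≤ N * #UF + N * #(B i) := by
      have step : ∀ u ∈ UF, 2 * c u i ≤ N + (if u ∈ B i then N else 0) := by
        intro u hu
        by_cases hub : u ∈ B i
        · have := hc_le u hu; rw [if_pos hub]; omega
        · have hnot : ¬ ∀ v ∈ V u, dotProduct (Matrix.vecMul u (r i)) v = 0 := by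
            intro hall
            exact hub (Finset.mem_filter.mpr ⟨hu, hall⟩)
          have hhalf := half_card n₂ (V u) (Matrix.vecMul u (r i)) hnot
          rw [hVcard u hu] at hhalf
          have h2c : 2 * c u i = N := hhalf
          rw [if_neg hub]
          omega
      calc 2 * (∑ u ∈ UF, c u i) = ∑ u ∈ UF, 2 * c u i := by rw [Finset.mul_sum]
        _ ≤ ∑ u ∈ UF, (N + (if u ∈ B i then N else 0)) := Finset.sum_le_sum step
        _ = N * #UF + ∑ u ∈ UF, (if u ∈ B i then N else 0) := by
            rw [Finset.sum_add_distrib, Finset.sum_const, smul_eq_mul, mul_comm]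
        _ = N * #UF + N * #(B i) := by
            congr 1
            rw [← Finset.sum_filter, Finset.sum_const, smul_eq_mul, mul_comm]
            congr 2
            ext u
            simp only [mem_filter]
            exact ⟨fun h => h.2, fun h => ⟨hBsub i h, h⟩⟩
    have hri := hr i
    rw [hQtot, hZ i] at hri
    have hnat : 3 * (N * #UF) ≤ 4 * ∑ u ∈ UF, c u i := by
      have h4 : (3 : ℝ) * (N * #UF) ≤ 4 * ∑ u ∈ UF, c u i := by push_cast at hri ⊢; linarith
      exact_mod_cast h4
    have hfin : N * #UF ≤ N * (2 * #(B i)) := by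
      have hh : N * (2 * #(B i)) = 2 * (N * #(B i)) := by ring
      rw [hh]
      linarith
    exact Nat.le_of_mul_le_mul_left hfin hNpos
  -- step 2 : many u lie in many B i
  set nn : (Fin n₁ → ZMod 2) → ℕ :=
    fun u => #{i ∈ (univ : Finset (Fin (2^(k+3)))) | u ∈ B i} with hnn
  have hswap : ∑ u ∈ UF, nn u = ∑ i : Fin (2^(k+3)), #(B i) := by
    simp only [hnn, Finset.card_filter]
    rw [Finset.sum_comm]
    apply Finset.sum_congr rfl
    intro i _
    rw [show (∑ u ∈ UF, if u ∈ B i then 1 else 0) = #{u ∈ UF | u ∈ B i}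
      from (Finset.card_filter _ _).symm]
    congr 1
    ext u
    simp only [mem_filter]
    exact ⟨fun h => h.2, fun h => ⟨hBsub i h, h⟩⟩
  have hsum1 : 2^(k+3) * #UF ≤ 2 * ∑ u ∈ UF, nn u := by
    rw [hswap, Finset.mul_sum]
    calc 2^(k+3) * #UF = ∑ _i : Fin (2^(k+3)), #UF := by
          rw [Finset.sum_const, Finset.card_univ, Fintype.card_fin, smul_eq_mul]
      _ ≤ ∑ i : Fin (2^(k+3)), 2 * #(B i) := Finset.sum_le_sum (fun i _ => hBineq i)
  set G : Finset (Fin n₁ → ZMod 2) := {u ∈ UF | 2^k + 1 ≤ nn u} with hG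
  have hnle : ∀ u, nn u ≤ 2^(k+3) := fun u => by
    calc nn u ≤ #(univ : Finset (Fin (2^(k+3)))) := Finset.card_filter_le _ _
      _ = 2^(k+3) := by rw [Finset.card_univ, Fintype.card_fin]
  have hGb : ∑ u ∈ UF, nn u ≤ #G * 2^(k+3) + 2^k * #UF := by
    rw [← Finset.sum_filter_add_sum_filter_not UF (fun u => 2^k+1 ≤ nn u)]
    apply add_le_add
    · calc ∑ u ∈ G, nn u ≤ #G • 2^(k+3) :=
            Finset.sum_le_card_nsmul _ _ _ (fun x _ => hnle x)
        _ = #G * 2^(k+3) := by rw [smul_eq_mul]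
    · calc ∑ u ∈ {u ∈ UF | ¬ 2^k+1 ≤ nn u}, nn u
          ≤ #{u ∈ UF | ¬ 2^k+1 ≤ nn u} • 2^k := by
            apply Finset.sum_le_card_nsmul
            intro x hx
            have := (Finset.mem_filter.mp hx).2
            omega
        _ ≤ #UF * 2^k := by
            rw [smul_eq_mul]
            exact Nat.mul_le_mul_right _ (Finset.card_filter_le _ _)
        _ = 2^k * #UF := mul_comm _ _
  have h3UF8G : 3 * #UF ≤ 8 * #G := by
    have h1 : 2^(k+3) * #UF ≤ 2 * (#G * 2^(k+3) + 2^k * #UF) :=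
      le_trans hsum1 (Nat.mul_le_mul_left 2 hGb)
    have h2 : 2^(k+1) * (4 * #UF) ≤ 2^(k+1) * (8 * #G + #UF) := by
      calc 2^(k+1) * (4 * #UF) = 2^(k+3) * #UF := by ring
        _ ≤ 2 * (#G * 2^(k+3) + 2^k * #UF) := h1
        _ = 2^(k+1) * (8 * #G + #UF) := by ring
    have h3 := Nat.le_of_mul_le_mul_left h2 (by positivity)
    omega
  -- step 3 : pigeonhole within each u ∈ G
  have hpair : ∀ u ∈ G, ∃ p : Fin (2^(k+3)) × Fin (2^(k+3)), p.1 ≠ p.2 ∧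
      Matrix.vecMul u (r p.1 - r p.2) = 0 := by
    intro u hu
    have huUF : u ∈ UF := (Finset.mem_filter.mp hu).1
    have hnu : 2^k + 1 ≤ nn u := (Finset.mem_filter.mp hu).2
    have huU : u ∈ U := by simpa [hUF] using huUF
    have hWcard : #{x ∈ (univ : Finset (Fin n₂ → ZMod 2)) | x ∈ orthW n₂ (V u)} ≤ 2^k := by
      rw [card_filter_mem]
      exact Nat.pow_le_pow_right (by norm_num) (finrank_orthW_le n₂ k (V u) (hV u huU))
    have hmaps : ∀ i ∈ {i ∈ (univ : Finset (Fin (2^(k+3)))) | u ∈ B i},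
        Matrix.vecMul u (r i) ∈ {x ∈ (univ : Finset (Fin n₂ → ZMod 2)) | x ∈ orthW n₂ (V u)} := by
      intro i hi
      have hiB : u ∈ B i := (Finset.mem_filter.mp hi).2
      have hall := (Finset.mem_filter.mp hiB).2
      simp only [mem_filter, mem_univ, true_and]
      rw [mem_orthW]
      exact hall
    have hlt : #{x ∈ (univ : Finset (Fin n₂ → ZMod 2)) | x ∈ orthW n₂ (V u)}
        < #{i ∈ (univ : Finset (Fin (2^(k+3)))) | u ∈ B i} := by
      have : #{i ∈ (univ : Finset (Fin (2^(k+3)))) | u ∈ B i} = nn u := rfl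
      omega
    obtain ⟨i, _, j, _, hij, heq⟩ := Finset.exists_ne_map_eq_of_card_lt_of_maps_to hlt hmaps
    exact ⟨(i, j), hij, by rw [Matrix.vecMul_sub, heq, sub_self]⟩
  -- choice of a pair for each u
  set g : (Fin n₁ → ZMod 2) → Fin (2^(k+3)) × Fin (2^(k+3)) := fun u =>
    if h : ∃ p : Fin (2^(k+3)) × Fin (2^(k+3)), p.1 ≠ p.2 ∧
        Matrix.vecMul u (r p.1 - r p.2) = 0
    then h.choose else (⟨0, hmpos⟩, ⟨0, hmpos⟩) with hg
  have hgspec : ∀ u ∈ G, (g u).1 ≠ (g u).2 ∧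
      Matrix.vecMul u (r (g u).1 - r (g u).2) = 0 := by
    intro u hu
    simp only [hg]
    rw [dif_pos (hpair u hu)]
    exact (hpair u hu).choose_spec
  -- fiberwise pigeonhole over pairs
  have hfib : #G = ∑ p ∈ (univ : Finset (Fin (2^(k+3)) × Fin (2^(k+3)))),
      #{u ∈ G | g u = p} :=
    Finset.card_eq_sum_card_fiberwise (fun u _ => Finset.mem_univ _)
  have hex : ∃ p ∈ (univ : Finset (Fin (2^(k+3)) × Fin (2^(k+3)))),
      G.card ≤ (2^(k+3))^2 * #{u ∈ G | g u = p} := by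
    have hne : (univ : Finset (Fin (2^(k+3)) × Fin (2^(k+3)))).Nonempty :=
      ⟨(⟨0, hmpos⟩, ⟨0, hmpos⟩), Finset.mem_univ _⟩
    apply Finset.exists_le_of_sum_le hne
    calc ∑ _p : Fin (2^(k+3)) × Fin (2^(k+3)), #G = (2^(k+3))^2 * #G := by
          rw [Finset.sum_const, Finset.card_univ, Fintype.card_prod, Fintype.card_fin,
            smul_eq_mul]; ring
      _ = ∑ p ∈ (univ : Finset (Fin (2^(k+3)) × Fin (2^(k+3)))),
            (2^(k+3))^2 * #{u ∈ G | g u = p} := by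
          rw [← Finset.mul_sum, ← hfib]
      _ ≤ _ := le_refl _
  obtain ⟨p, _, hp⟩ := hex
  have hGpos : 0 < #G := by omega
  have hfibpos : 0 < #{u ∈ G | g u = p} := by
    rcases Nat.eq_zero_or_pos #{u ∈ G | g u = p} with h0 | h0
    · rw [h0, mul_zero] at hp; omega
    · exact h0
  obtain ⟨u₀, hu₀⟩ := Finset.card_pos.mp hfibpos
  have hu₀G : u₀ ∈ G := (Finset.mem_filter.mp hu₀).1
  have hu₀g : g u₀ = p := (Finset.mem_filter.mp hu₀).2
  have hij : p.1 ≠ p.2 := by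
    have := (hgspec u₀ hu₀G).1; rwa [hu₀g] at this
  have hfibsub : {u ∈ G | g u = p} ⊆
      {w ∈ (univ : Finset (Fin n₁ → ZMod 2)) | Matrix.vecMul w (r p.1 - r p.2) = 0} := by
    intro u hu
    have huG : u ∈ G := (Finset.mem_filter.mp hu).1
    have hug : g u = p := (Finset.mem_filter.mp hu).2
    have := (hgspec u huG).2
    rw [hug] at this
    simp only [mem_filter, mem_univ, true_and]
    exact this
  have hKF : #{u ∈ G | g u = p} ≤ #{w ∈ (univ : Finset (Fin n₁ → ZMod 2)) | Matrix.vecMul w (r p.1 - r p.2) = 0} :=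
    Finset.card_le_card hfibsub
  have hchain : 2^n₁ ≤ 2^(3*k+9) * #{w ∈ (univ : Finset (Fin n₁ → ZMod 2)) | Matrix.vecMul w (r p.1 - r p.2) = 0} := by
    calc 2^n₁ ≤ 2^(k + finrank (ZMod 2) U) := Nat.pow_le_pow_right (by norm_num) (by omega)
      _ = 2^k * #UF := by rw [hUFcard, pow_add]
      _ ≤ 2^k * (8 * #G) := Nat.mul_le_mul_left _ (by omega)
      _ ≤ 2^k * (8 * ((2^(k+3))^2 *
            #{w ∈ (univ : Finset (Fin n₁ → ZMod 2)) | Matrix.vecMul w (r p.1 - r p.2) = 0})) := by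
          apply Nat.mul_le_mul_left
          apply Nat.mul_le_mul_left
          exact le_trans hp (Nat.mul_le_mul_left _ hKF)
      _ = 2^(3*k+9) * #{w ∈ (univ : Finset (Fin n₁ → ZMod 2)) | Matrix.vecMul w (r p.1 - r p.2) = 0} := by ring
  have hncard : Set.ncard {w : Fin n₁ → ZMod 2 | Matrix.vecMul w (r p.1 - r p.2) = 0}
      = #{w ∈ (univ : Finset (Fin n₁ → ZMod 2)) | Matrix.vecMul w (r p.1 - r p.2) = 0} := ncard_eq_card_filter _
  refine ⟨p.1, p.2, hij, ?_, ?_⟩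
  · rw [hncard]
    have h2L : (0:ℝ) < 2^(3*k+9) := by positivity
    rw [one_div, inv_pow, inv_mul_le_iff₀ h2L]
    exact_mod_cast hchain
  · have hflt : #{w ∈ (univ : Finset (Fin n₁ → ZMod 2)) | Matrix.vecMul w (r p.1 - r p.2) = 0}
        = 2 ^ finrank (ZMod 2)
            (LinearMap.ker (Matrix.mulVecLin (r p.1 - r p.2).transpose)) := by
      rw [show {w ∈ (univ : Finset (Fin n₁ → ZMod 2)) | Matrix.vecMul w (r p.1 - r p.2) = 0}
          = {w ∈ (univ : Finset (Fin n₁ → ZMod 2)) | w ∈ LinearMap.ker (Matrix.mulVecLin (r p.1 - r p.2).transpose)}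
          from by
        apply Finset.filter_congr
        intro w _
        rw [LinearMap.mem_ker, Matrix.mulVecLin_apply, Matrix.mulVec_transpose]]
      exact card_filter_mem _
    rw [hflt, ← pow_add] at hchain
    have hle : n₁ ≤ 3*k+9 + finrank (ZMod 2)
        (LinearMap.ker (Matrix.mulVecLin (r p.1 - r p.2).transpose)) :=
      (Nat.pow_le_pow_iff_right (by norm_num)).mp hchain
    have hrk : (r p.1 - r p.2).transpose.rank = finrank (ZMod 2)
        (LinearMap.range (Matrix.mulVecLin (r p.1 - r p.2).transpose)) := rfl
    have hrn := LinearMap.finrank_range_add_finrank_ker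
      (Matrix.mulVecLin (r p.1 - r p.2).transpose)
    have hfr : finrank (ZMod 2) (Fin n₁ → ZMod 2) = n₁ := by simp
    rw [hfr] at hrn
    have htr := Matrix.rank_transpose (r p.1 - r p.2)
    omega
end

section
/- There exists an absolute constant ε' > 0 such that for all positive integers k and l there exists a positive integer K with the following property. Let n_1, n_2 be positive integers, let U ⊆ F_2^{n_1} be a subspace of codimension at most k, and for each u ∈ U let V_u ⊆ F_2^{n_2} be a subspace of codimension at most k, with all the V_u having the same codimension. Let Q be the multiset of matrices u⊗v indexed by pairs (u,v) with u ∈ U and v ∈ V_u. Then there exist subspaces W_1 ⊆ F_2^{n_1} and W_2 ⊆ F_2^{n_2}, each of dimension at most K, such that every matrix r ∈ 𝒢 of rank at most l satisfying r·(u⊗v) = 0 for at least (1−ε')|Q| of the pairs (u,v) with u ∈ U, v ∈ V_u lies in W_1⊗F_2^{n_2} + F_2^{n_1}⊗W_2. -/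
open Finset Module Matrix

namespace Stmt11Aux

variable {n : ℕ}

/-- dot-product annihilator of a subspace of `F_2^n`. -/
def ann (V : Submodule (ZMod 2) (Fin n → ZMod 2)) : Submodule (ZMod 2) (Fin n → ZMod 2) where
  carrier := {w | ∀ v ∈ V, dotProduct w v = 0}
  add_mem' := fun {a b} ha hb v hv => by
    rw [add_dotProduct, ha v hv, hb v hv, add_zero]
  zero_mem' := fun v hv => zero_dotProduct v
  smul_mem' := fun c w hw v hv => by rw [smul_dotProduct, hw v hv, smul_zero]

lemma mem_ann {V : Submodule (ZMod 2) (Fin n → ZMod 2)} {w : Fin n → ZMod 2} :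
    w ∈ ann V ↔ ∀ v ∈ V, dotProduct w v = 0 := Iff.rfl

/-- the dot product pairing as a map to the dual. -/
noncomputable def toDualMap (n : ℕ) :
    (Fin n → ZMod 2) →ₗ[ZMod 2] Module.Dual (ZMod 2) (Fin n → ZMod 2) :=
  LinearMap.mk₂ (ZMod 2) (fun w v => dotProduct w v)
    (fun a b v => add_dotProduct a b v)
    (fun c a v => smul_dotProduct c a v)
    (fun w a b => dotProduct_add w a b)
    (fun c w a => dotProduct_smul c w a)

lemma toDualMap_injective (n : ℕ) : Function.Injective (toDualMap n) := by
  intro a b hab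
  funext j
  have := congrArg (fun f => f (Pi.single j 1)) hab
  simpa [toDualMap, dotProduct_single] using this

lemma finrank_ann_le (V : Submodule (ZMod 2) (Fin n → ZMod 2)) :
    finrank (ZMod 2) (ann V) ≤ n - finrank (ZMod 2) V := by
  have h1 : Submodule.map (toDualMap n) (ann V) ≤ V.dualAnnihilator := by
    rintro _ ⟨w, hw, rfl⟩
    rw [Submodule.mem_dualAnnihilator]
    exact fun v hv => hw v hv
  have h2 : finrank (ZMod 2) (ann V) =
      finrank (ZMod 2) (Submodule.map (toDualMap n) (ann V)) :=
    (Submodule.equivMapOfInjective _ (toDualMap_injective n) _).finrank_eq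
  have h3 : finrank (ZMod 2) V.dualAnnihilator =
      finrank (ZMod 2) ((Fin n → ZMod 2) ⧸ V) :=
    (Subspace.quotEquivAnnihilator V).symm.finrank_eq
  have h4 : finrank (ZMod 2) ((Fin n → ZMod 2) ⧸ V) + finrank (ZMod 2) V =
      finrank (ZMod 2) (Fin n → ZMod 2) := Submodule.finrank_quotient_add_finrank V
  have h5 : finrank (ZMod 2) (Fin n → ZMod 2) = n := by
    simp [Module.finrank_pi]
  have h6 := Submodule.finrank_mono h1
  omega

lemma card_submodule (W : Submodule (ZMod 2) (Fin n → ZMod 2)) :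
    Nat.card W = 2 ^ finrank (ZMod 2) W := by
  have : Fintype W := Fintype.ofFinite _
  rw [Nat.card_eq_fintype_card, card_eq_pow_finrank (K := ZMod 2), ZMod.card]

lemma card_filter_submodule (W : Submodule (ZMod 2) (Fin n → ZMod 2))
    [DecidablePred (· ∈ W)] :
    (univ.filter (· ∈ W)).card = 2 ^ finrank (ZMod 2) W := by
  rw [← Fintype.card_subtype, ← Nat.card_eq_fintype_card, card_submodule]

lemma matDot_eq {n₁ n₂ : ℕ} (r : Matrix (Fin n₁) (Fin n₂) (ZMod 2))
    (u : Fin n₁ → ZMod 2) (v : Fin n₂ → ZMod 2) :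
    matDot n₁ n₂ r (Matrix.vecMulVec u v) = dotProduct (Matrix.vecMul u r) v := by
  unfold matDot
  rw [Finset.sum_comm]
  simp only [Matrix.vecMulVec_apply, dotProduct, Matrix.vecMul, Finset.sum_mul]
  congr 1; funext j; congr 1; funext i; ring

end Stmt11Aux

open Stmt11Aux

set_option maxHeartbeats 2000000

theorem stmt11 :
    ∃ ε' : ℝ, 0 < ε' ∧ ∀ k l : ℕ, 0 < k → 0 < l → ∃ K : ℕ, 0 < K ∧
      ∀ n₁ n₂ : ℕ, 0 < n₁ → 0 < n₂ →
        ∀ U : Submodule (ZMod 2) (Fin n₁ → ZMod 2), n₁ - Module.finrank (ZMod 2) U ≤ k →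
          ∀ V : (Fin n₁ → ZMod 2) → Submodule (ZMod 2) (Fin n₂ → ZMod 2),
            (∀ u ∈ U, n₂ - Module.finrank (ZMod 2) (V u) ≤ k) →
            (∀ u ∈ U, ∀ u' ∈ U,
              Module.finrank (ZMod 2) (V u) = Module.finrank (ZMod 2) (V u')) →
            ∃ W₁ : Submodule (ZMod 2) (Fin n₁ → ZMod 2),
              ∃ W₂ : Submodule (ZMod 2) (Fin n₂ → ZMod 2),
                Module.finrank (ZMod 2) W₁ ≤ K ∧ Module.finrank (ZMod 2) W₂ ≤ K ∧
                ∀ r : Matrix (Fin n₁) (Fin n₂) (ZMod 2), r.rank ≤ l →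
                  ((1 - ε') * qCount n₁ n₂ U V (fun _ _ => True) ≤
                    (qCount n₁ n₂ U V
                      (fun u v => matDot n₁ n₂ r (Matrix.vecMulVec u v) = 0) : ℝ)) →
                  r ∈ colCyl n₁ n₂ W₁ ⊔ rowCyl n₁ n₂ W₂ := by
  classical
  refine ⟨1/32, by norm_num, fun k l hk hl => ⟨2 ^ (k + l + 2) + k, by positivity, ?_⟩⟩
  intro n₁ n₂ hn₁ hn₂ U hUk V hVk hVeq
  set Uf : Finset (Fin n₁ → ZMod 2) := univ.filter (· ∈ U) with hUfdef
  have hmemUf : ∀ u : Fin n₁ → ZMod 2, u ∈ Uf ↔ u ∈ U := by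
    intro u; simp [hUfdef]
  set m : ℕ := finrank (ZMod 2) (V 0) with hm
  have hUf0 : (0 : Fin n₁ → ZMod 2) ∈ Uf := (hmemUf 0).mpr U.zero_mem
  have hUcard_pos : 0 < Uf.card := Finset.card_pos.mpr ⟨0, hUf0⟩
  have hVcard : ∀ u ∈ Uf, (univ.filter (· ∈ V u)).card = 2 ^ m := by
    intro u hu
    rw [card_filter_submodule, hVeq u ((hmemUf u).mp hu) 0 U.zero_mem]
  -- the qCount formula
  have hq : ∀ p : (Fin n₁ → ZMod 2) → (Fin n₂ → ZMod 2) → Prop,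
      qCount n₁ n₂ U V p = ∑ u ∈ Uf, (univ.filter fun v => v ∈ V u ∧ p u v).card := by
    intro p
    rw [qCount, Set.ncard_eq_toFinset_card']
    rw [Finset.card_eq_sum_card_fiberwise (f := Prod.fst) (t := Uf)
      (fun q hq => by
        simp only [Finset.mem_coe, Set.mem_toFinset, Set.mem_setOf_eq] at hq
        exact (hmemUf q.1).mpr hq.1)]
    refine Finset.sum_congr rfl fun u hu => ?_
    refine Finset.card_bij (fun q _ => q.2) ?_ ?_ ?_
    · intro q hq
      simp only [Finset.mem_filter, Set.mem_toFinset, Set.mem_setOf_eq] at hq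
      obtain ⟨⟨h1, h2, h3⟩, h4⟩ := hq
      simp only [Finset.mem_filter, Finset.mem_univ, true_and]
      rw [← h4]
      exact ⟨h2, h3⟩
    · intro q hq q' hq' h
      simp only [Finset.mem_filter, Set.mem_toFinset, Set.mem_setOf_eq] at hq hq'
      exact Prod.ext (hq.2.trans hq'.2.symm) h
    · intro v hv
      simp only [Finset.mem_filter, Finset.mem_univ, true_and] at hv
      refine ⟨(u, v), ?_, rfl⟩
      exact Finset.mem_filter.mpr
        ⟨Set.mem_toFinset.mpr ⟨(hmemUf u).mp hu, hv.1, hv.2⟩, rfl⟩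
  -- the complement and projection
  obtain ⟨C, hC⟩ := Submodule.exists_isCompl U
  set ρ : (Fin n₁ → ZMod 2) →ₗ[ZMod 2] (Fin n₁ → ZMod 2) :=
    U.subtype.comp (U.projectionOnto C hC) with hρ
  have hρ_memU : ∀ x, ρ x ∈ U := fun x => SetLike.coe_mem _
  have hρ_left : ∀ x ∈ U, ρ x = x := by
    intro x hx
    show (U.projectionOnto C hC x : Fin n₁ → ZMod 2) = x
    have : U.projectionOnto C hC x = ⟨x, hx⟩ := by
      have := Submodule.projectionOnto_apply_left hC ⟨x, hx⟩
      simpa using this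
    rw [this]
  have hρ_right : ∀ x ∈ C, ρ x = 0 := by
    intro x hx
    show (U.projectionOnto C hC x : Fin n₁ → ZMod 2) = 0
    rw [Submodule.projectionOnto_apply_of_mem_right hC hx]
    rfl
  set N : Matrix (Fin n₁) (Fin n₁) (ZMod 2) :=
    Matrix.of (fun i mm => ρ (Pi.single i 1) mm) with hN
  have hvecMulN : ∀ x : Fin n₁ → ZMod 2, Matrix.vecMul x N = ρ x := by
    intro x
    have hx : x = ∑ i, x i • Pi.single i (1 : ZMod 2) := by
      have := pi_eq_sum_univ x
      convert this using 2 with i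
      funext j
      simp [Pi.single_apply, eq_comm]
    funext jj
    have lhs : Matrix.vecMul x N jj = ∑ i, x i * ρ (Pi.single i 1) jj := by
      simp [Matrix.vecMul, dotProduct, hN]
    rw [lhs]
    conv_rhs => rw [hx]
    rw [map_sum]
    simp [Finset.sum_apply, smul_eq_mul]
  -- the popular set
  set P : Finset (Fin n₂ → ZMod 2) :=
    univ.filter (fun w =>
      Uf.card ≤ (Uf.filter fun u => w ∈ ann (V u)).card * 2 ^ (l + 2)) with hPdef
  refine ⟨LinearMap.range (Matrix.mulVecLin (1 - N)),
    Submodule.span (ZMod 2) (P : Set (Fin n₂ → ZMod 2)), ?_, ?_, ?_⟩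
  · -- finrank W₁ ≤ K
    have hW₁C : LinearMap.range (Matrix.vecMulLinear (1 - N)) ≤ C := by
      rintro _ ⟨x, rfl⟩
      rw [Matrix.vecMulLinear_apply, Matrix.vecMul_sub, Matrix.vecMul_one, hvecMulN]
      have hx : x ∈ U ⊔ C := by
        rw [codisjoint_iff.mp hC.codisjoint]; exact Submodule.mem_top
      obtain ⟨u, hu, c, hc, hx⟩ := Submodule.mem_sup.mp hx
      rw [← hx, map_add, hρ_left u hu, hρ_right c hc, add_zero, add_sub_cancel_left]
      exact hc
    have h1 : finrank (ZMod 2) (LinearMap.range (Matrix.mulVecLin (1 - N))) =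
        (1 - N).rank := rfl
    have h2 : ((1 - N)ᵀ).rank =
        finrank (ZMod 2) (LinearMap.range (Matrix.vecMulLinear (1 - N))) := by
      rw [Matrix.rank, Matrix.mulVecLin_transpose]
    have h3 : finrank (ZMod 2) (LinearMap.range (Matrix.vecMulLinear (1 - N))) ≤
        finrank (ZMod 2) C := Submodule.finrank_mono hW₁C
    have h4 : finrank (ZMod 2) U + finrank (ZMod 2) C =
        finrank (ZMod 2) (Fin n₁ → ZMod 2) := Submodule.finrank_add_eq_of_isCompl hC
    have h5 : finrank (ZMod 2) (Fin n₁ → ZMod 2) = n₁ := by simp [Module.finrank_pi]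
    rw [h1, ← Matrix.rank_transpose (1 - N), h2]
    have h6 : finrank (ZMod 2) U ≤ finrank (ZMod 2) (Fin n₁ → ZMod 2) :=
      Submodule.finrank_le U
    have h7 : finrank (ZMod 2) C ≤ k := by omega
    exact le_trans h3 (le_trans h7 (Nat.le_add_left k _))
  · -- finrank W₂ ≤ K
    have hsum : ∀ u ∈ Uf, (univ.filter (· ∈ ann (V u))).card ≤ 2 ^ k := by
      intro u hu
      rw [card_filter_submodule]
      have h1 := finrank_ann_le (V u)
      have h2 := hVk u ((hmemUf u).mp hu)
      exact Nat.pow_le_pow_right (by norm_num) (by omega)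
    have hswap : ∑ w : Fin n₂ → ZMod 2, (Uf.filter fun u => w ∈ ann (V u)).card
        = ∑ u ∈ Uf, (univ.filter (fun w => w ∈ ann (V u))).card := by
      simp only [Finset.card_filter]
      rw [Finset.sum_comm]
    have htot : ∑ w : Fin n₂ → ZMod 2, (Uf.filter fun u => w ∈ ann (V u)).card
        ≤ Uf.card * 2 ^ k := by
      rw [hswap]
      calc ∑ u ∈ Uf, (univ.filter (fun w => w ∈ ann (V u))).card
          ≤ ∑ u ∈ Uf, 2 ^ k := Finset.sum_le_sum hsum
        _ = Uf.card * 2 ^ k := by rw [Finset.sum_const, smul_eq_mul]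
    have hPcard : P.card ≤ 2 ^ (k + l + 2) := by
      have h1 : P.card * Uf.card ≤
          (∑ w ∈ P, (Uf.filter fun u => w ∈ ann (V u)).card) * 2 ^ (l + 2) := by
        rw [Finset.sum_mul]
        calc P.card * Uf.card = ∑ _w ∈ P, Uf.card := by
              rw [Finset.sum_const, smul_eq_mul]
          _ ≤ ∑ w ∈ P, (Uf.filter fun u => w ∈ ann (V u)).card * 2 ^ (l + 2) := by
              apply Finset.sum_le_sum
              intro w hw
              exact (Finset.mem_filter.mp hw).2
      have h2 : (∑ w ∈ P, (Uf.filter fun u => w ∈ ann (V u)).card)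
          ≤ Uf.card * 2 ^ k := by
        refine le_trans (Finset.sum_le_sum_of_subset (Finset.subset_univ P)) htot
      have h3 : P.card * Uf.card ≤ Uf.card * 2 ^ k * 2 ^ (l + 2) :=
        le_trans h1 (Nat.mul_le_mul_right _ h2)
      have h4 : P.card * Uf.card ≤ (2 ^ k * 2 ^ (l + 2)) * Uf.card := by
        calc P.card * Uf.card ≤ Uf.card * 2 ^ k * 2 ^ (l + 2) := h3
          _ = (2 ^ k * 2 ^ (l + 2)) * Uf.card := by ring
      have h5 := Nat.le_of_mul_le_mul_right h4 hUcard_pos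
      calc P.card ≤ 2 ^ k * 2 ^ (l + 2) := h5
        _ = 2 ^ (k + l + 2) := by rw [← pow_add]; ring_nf
    calc finrank (ZMod 2) (Submodule.span (ZMod 2) (P : Set (Fin n₂ → ZMod 2)))
        ≤ P.card := finrank_span_finset_le_card P
      _ ≤ 2 ^ (k + l + 2) := hPcard
      _ ≤ 2 ^ (k + l + 2) + k := Nat.le_add_right _ _
  · -- main part
    intro r hrank hineq
    -- counting setup
    have hqT : qCount n₁ n₂ U V (fun _ _ => True) = Uf.card * 2 ^ m := by
      rw [hq]
      simp only [and_true]
      exact (Finset.sum_congr rfl hVcard).trans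
        (by rw [Finset.sum_const, smul_eq_mul])
    have hqC : qCount n₁ n₂ U V
        (fun u v => matDot n₁ n₂ r (Matrix.vecMulVec u v) = 0) =
        ∑ u ∈ Uf, (univ.filter fun v =>
          v ∈ V u ∧ dotProduct (Matrix.vecMul u r) v = 0).card := by
      rw [hq]
      refine Finset.sum_congr rfl fun u _ => ?_
      congr 1
      ext v
      simp only [Finset.mem_filter, matDot_eq]
    set cnt : ℕ := ∑ u ∈ Uf, (univ.filter fun v =>
      v ∈ V u ∧ dotProduct (Matrix.vecMul u r) v = 0).card with hcnt
    have h31 : 31 * (Uf.card * 2 ^ m) ≤ 32 * cnt := by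
      have hR : (31 : ℝ) * (Uf.card * 2 ^ m : ℕ) ≤ 32 * (cnt : ℕ) := by
        rw [← hqT, ← hqC] at *
        linarith [hineq]
      exact_mod_cast hR
    -- the good set
    set Sgood : Finset (Fin n₁ → ZMod 2) :=
      Uf.filter (fun u => Matrix.vecMul u r ∈ ann (V u)) with hSgood
    -- halving bound
    have hZle : ∀ u ∈ Uf,
        2 * (univ.filter fun v =>
          v ∈ V u ∧ dotProduct (Matrix.vecMul u r) v = 0).card
        ≤ 2 ^ m + (if u ∈ Sgood then 2 ^ m else 0) := by
      intro u hu
      have hself : (univ.filter fun v =>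
          v ∈ V u ∧ dotProduct (Matrix.vecMul u r) v = 0).card
          ≤ 2 ^ m := by
        rw [← hVcard u hu]
        apply Finset.card_le_card
        intro v hv
        simp only [Finset.mem_filter] at hv ⊢
        exact ⟨hv.1, hv.2.1⟩
      by_cases hgood : u ∈ Sgood
      · simp only [hgood, if_true]
        omega
      · simp only [hgood, if_false, add_zero]
        have hbad : ∃ v₀ ∈ V u, dotProduct (Matrix.vecMul u r) v₀ ≠ 0 := by
          by_contra hcon
          push_neg at hcon
          exact hgood (Finset.mem_filter.mpr ⟨hu, fun v hv => hcon v hv⟩)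
        obtain ⟨v₀, hv₀, hv₀ne⟩ := hbad
        have hmap : (univ.filter fun v =>
            v ∈ V u ∧ dotProduct (Matrix.vecMul u r) v = 0).card
            ≤ (univ.filter fun v =>
            v ∈ V u ∧ ¬ dotProduct (Matrix.vecMul u r) v = 0).card := by
          apply Finset.card_le_card_of_injOn (fun v => v + v₀)
          · intro v hv
            simp only [Finset.mem_coe, Finset.mem_filter, Finset.mem_univ, true_and] at hv ⊢
            refine ⟨(V u).add_mem hv.1 hv₀, ?_⟩
            rw [dotProduct_add, hv.2, zero_add]
            exact hv₀ne
          · intro a _ b _ hab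
            exact add_left_injective v₀ hab
        have hsplit :
            ((univ.filter (· ∈ V u)).filter
              (fun v => dotProduct (Matrix.vecMul u r) v = 0)).card +
            ((univ.filter (· ∈ V u)).filter
              (fun v => ¬ dotProduct (Matrix.vecMul u r) v = 0)).card =
            (univ.filter (· ∈ V u)).card :=
          Finset.card_filter_add_card_filter_not _
        rw [Finset.filter_filter, Finset.filter_filter] at hsplit
        rw [hVcard u hu] at hsplit
        omega
    have h2cnt : 2 * cnt ≤ (Uf.card + Sgood.card) * 2 ^ m := by
      rw [hcnt, Finset.mul_sum]
      calc ∑ u ∈ Uf, 2 * (univ.filter fun v =>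
            v ∈ V u ∧ dotProduct (Matrix.vecMul u r) v = 0).card
          ≤ ∑ u ∈ Uf, (2 ^ m + if u ∈ Sgood then 2 ^ m else 0) :=
            Finset.sum_le_sum hZle
        _ = Uf.card * 2 ^ m + ∑ u ∈ Uf, (if u ∈ Sgood then 2 ^ m else 0) := by
            rw [Finset.sum_add_distrib, Finset.sum_const, smul_eq_mul]
        _ = Uf.card * 2 ^ m + Sgood.card * 2 ^ m := by
            rw [Finset.sum_ite_mem,
              Finset.inter_eq_right.mpr (Finset.filter_subset _ _),
              Finset.sum_const, smul_eq_mul]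
        _ = (Uf.card + Sgood.card) * 2 ^ m := by ring
    have hA : 15 * Uf.card ≤ 16 * Sgood.card := by
      have h1 : 31 * Uf.card * 2 ^ m ≤ 16 * (Uf.card + Sgood.card) * 2 ^ m := by
        calc 31 * Uf.card * 2 ^ m = 31 * (Uf.card * 2 ^ m) := by ring
          _ ≤ 32 * cnt := h31
          _ = 16 * (2 * cnt) := by ring
          _ ≤ 16 * ((Uf.card + Sgood.card) * 2 ^ m) := Nat.mul_le_mul_left _ h2cnt
          _ = 16 * (Uf.card + Sgood.card) * 2 ^ m := by ring
      have h2 : 31 * Uf.card ≤ 16 * (Uf.card + Sgood.card) :=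
        Nat.le_of_mul_le_mul_right h1 (by positivity)
      omega
    -- the image is small
    set Tf : Finset (Fin n₂ → ZMod 2) := Uf.image (fun u => Matrix.vecMul u r)
      with hTf
    have hTcard : Tf.card ≤ 2 ^ l := by
      have hsub : Tf ⊆ univ.filter
          (· ∈ Submodule.map (Matrix.vecMulLinear r) U) := by
        intro w hw
        obtain ⟨u, hu, rfl⟩ := Finset.mem_image.mp hw
        simp only [Finset.mem_filter, Finset.mem_univ, true_and]
        exact ⟨u, (hmemUf u).mp hu, rfl⟩
      have hfr : finrank (ZMod 2) (Submodule.map (Matrix.vecMulLinear r) U) ≤ l := by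
        have hle : Submodule.map (Matrix.vecMulLinear r) U ≤
            LinearMap.range (Matrix.vecMulLinear r) := LinearMap.map_le_range
        have h1 := Submodule.finrank_mono hle
        rw [range_vecMulLinear] at h1
        rw [← Matrix.rank_eq_finrank_span_row] at h1
        exact le_trans h1 hrank
      calc Tf.card ≤ _ := Finset.card_le_card hsub
        _ = 2 ^ finrank (ZMod 2) (Submodule.map (Matrix.vecMulLinear r) U) :=
          card_filter_submodule _
        _ ≤ 2 ^ l := Nat.pow_le_pow_right (by norm_num) hfr
    -- the bad set
    set Bad : Finset (Fin n₁ → ZMod 2) :=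
      Sgood.filter (fun u => Matrix.vecMul u r ∉ P) with hBadDef
    have hBad : 4 * Bad.card ≤ Uf.card - 1 := by
      have hfib := Finset.card_eq_sum_card_fiberwise
        (s := Bad) (t := Tf.filter (· ∉ P)) (f := fun u => Matrix.vecMul u r)
        (fun u hu => by
          simp only [Finset.mem_coe, hBadDef, Finset.mem_filter] at hu
          refine Finset.mem_filter.mpr ⟨?_, hu.2⟩
          exact Finset.mem_image.mpr ⟨u, (Finset.mem_filter.mp hu.1).1, rfl⟩)
      have hBsum : Bad.card ≤ ∑ w ∈ Tf.filter (· ∉ P),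
          (Uf.filter fun u => w ∈ ann (V u)).card := by
        rw [hfib]
        apply Finset.sum_le_sum
        intro w hw
        apply Finset.card_le_card
        intro u hu
        simp only [Finset.mem_filter] at hu ⊢
        obtain ⟨hu1, hu3⟩ := hu
        simp only [hBadDef, hSgood, Finset.mem_filter] at hu1
        exact ⟨hu1.1.1, hu3 ▸ hu1.1.2⟩
      have hterm : ∀ w ∈ Tf.filter (· ∉ P),
          (Uf.filter fun u => w ∈ ann (V u)).card * 2 ^ (l + 2) ≤ Uf.card - 1 := by
        intro w hw
        have := (Finset.mem_filter.mp hw).2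
        simp only [hPdef, Finset.mem_filter, Finset.mem_univ, true_and, not_le]
          at this
        omega
      have hchain : Bad.card * 2 ^ (l + 2) ≤ 2 ^ l * (Uf.card - 1) := by
        calc Bad.card * 2 ^ (l + 2)
            ≤ (∑ w ∈ Tf.filter (· ∉ P),
              (Uf.filter fun u => w ∈ ann (V u)).card) * 2 ^ (l + 2) :=
              Nat.mul_le_mul_right _ hBsum
          _ = ∑ w ∈ Tf.filter (· ∉ P),
              (Uf.filter fun u => w ∈ ann (V u)).card * 2 ^ (l + 2) :=
              Finset.sum_mul ..
          _ ≤ (Tf.filter (· ∉ P)).card * (Uf.card - 1) := by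
              have := Finset.sum_le_card_nsmul (Tf.filter (· ∉ P))
                (fun w => (Uf.filter fun u => w ∈ ann (V u)).card * 2 ^ (l + 2))
                (Uf.card - 1) hterm
              simpa [smul_eq_mul] using this
          _ ≤ 2 ^ l * (Uf.card - 1) := by
              refine Nat.mul_le_mul_right _ ?_
              exact le_trans (Finset.card_le_card (Finset.filter_subset _ _)) hTcard
      have hchain2 : 2 ^ l * (4 * Bad.card) ≤ 2 ^ l * (Uf.card - 1) := by
        calc 2 ^ l * (4 * Bad.card) = Bad.card * 2 ^ (l + 2) := by
              rw [pow_add]; ring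
          _ ≤ 2 ^ l * (Uf.card - 1) := hchain
      exact Nat.le_of_mul_le_mul_left hchain2 (by positivity)
    -- the good & popular set
    set S' : Finset (Fin n₁ → ZMod 2) :=
      Sgood.filter (fun u => Matrix.vecMul u r ∈ P) with hS'def
    have hS'sub : S' ⊆ Uf :=
      le_trans (Finset.filter_subset _ _) (Finset.filter_subset _ _)
    have hS'card : Uf.card < 2 * S'.card := by
      have hsplit : S'.card + Bad.card = Sgood.card := by
        have := Finset.card_filter_add_card_filter_not
          (s := Sgood) (p := fun u => Matrix.vecMul u r ∈ P)
        simpa using this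
      have hSle : Sgood.card ≤ Uf.card := Finset.card_le_card (Finset.filter_subset _ _)
      omega
    -- every vecMul x r for x ∈ U is in the span of P
    have hmain : ∀ x ∈ U, Matrix.vecMul x r ∈
        Submodule.span (ZMod 2) (P : Set (Fin n₂ → ZMod 2)) := by
      intro x hx
      have himg : (S'.image (fun s => x + s)) ⊆ Uf := by
        intro y hy
        obtain ⟨s, hs, rfl⟩ := Finset.mem_image.mp hy
        exact (hmemUf _).mpr (U.add_mem hx ((hmemUf s).mp (hS'sub hs)))
      have hcardimg : (S'.image (fun s => x + s)).card = S'.card :=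
        Finset.card_image_of_injective _ (add_right_injective x)
      have hnd : ¬ Disjoint S' (S'.image (fun s => x + s)) := by
        intro hdisj
        have h1 := Finset.card_union_of_disjoint hdisj
        have h2 : (S' ∪ S'.image (fun s => x + s)) ⊆ Uf :=
          Finset.union_subset hS'sub himg
        have h3 := Finset.card_le_card h2
        omega
      obtain ⟨y, hy1, hy2⟩ := Finset.not_disjoint_iff.mp hnd
      obtain ⟨s, hs, hys⟩ := Finset.mem_image.mp hy2
      have hxy : x = y - s := by rw [← hys]; abel
      rw [hxy, Matrix.sub_vecMul]
      apply Submodule.sub_mem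
      · exact Submodule.subset_span ((Finset.mem_filter.mp hy1).2)
      · exact Submodule.subset_span ((Finset.mem_filter.mp hs).2)
    -- assemble the decomposition
    have hr2 : (N * r) ∈ rowCyl n₁ n₂
        (Submodule.span (ZMod 2) (P : Set (Fin n₂ → ZMod 2))) := by
      show ∀ i, (fun j => (N * r) i j) ∈ _
      intro i
      have hrow : (fun j => (N * r) i j) = Matrix.vecMul (ρ (Pi.single i 1)) r := by
        funext j
        simp [Matrix.mul_apply, Matrix.vecMul, dotProduct, hN]
      rw [hrow]
      exact hmain _ (hρ_memU _)
    have hr1 : (r - N * r) ∈ colCyl n₁ n₂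
        (LinearMap.range (Matrix.mulVecLin (1 - N))) := by
      have hMr : (1 - N) * r = r - N * r := by
        rw [Matrix.sub_mul, Matrix.one_mul]
      show ∀ j, (fun i => (r - N * r) i j) ∈ _
      intro j
      rw [← hMr]
      refine ⟨(fun mm => r mm j), ?_⟩
      funext i
      simp [Matrix.mulVecLin_apply, Matrix.mulVec, dotProduct,
        Matrix.mul_apply, sub_mul, Finset.sum_sub_distrib, Matrix.one_apply, ite_mul]
    exact Submodule.mem_sup.mpr ⟨r - N * r, hr1, N * r, hr2, sub_add_cancel r (N * r)⟩
end

section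
/- For every positive integer d and every δ > 0 there exist a nonnegative integer l (depending on d and δ) and a positive integer c (depending only on d) with the following property: for all positive integers n_1,…,n_d and every subset ℬ' ⊆ F_2^{n_1}×⋯×F_2^{n_d} with |ℬ'| ≥ δ·2^{n_1+⋯+n_d}, there exists an l-system Q ⊆ F_2^{n_1}×⋯×F_2^{n_d} such that for every tuple (u_1,…,u_d) ∈ Q, the array u_1⊗⋯⊗u_d is a sum of at most c arrays v_1⊗⋯⊗v_d with (v_1,…,v_d) ∈ ℬ'. -/
open Finset

/-- The space of `d`-tuples `(u_1, …, u_d)` with `u_i ∈ F_2^{n_i}`. -/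
abbrev Tup (d : ℕ) (n : Fin d → ℕ) := (i : Fin d) → (Fin (n i) → ZMod 2)

/-- `Q` is an `l`-system: there is a choice function `S`, assigning to each index `j` and
each tuple `u` a subspace `S j u ⊆ F_2^{n_j}` of codimension at most `l` that depends only
on the coordinates `u_1, …, u_{j-1}`, such that `Q` is the set of tuples `u` with
`u_j ∈ S j u` for every `j`. -/
def IsSystem (d : ℕ) (n : Fin d → ℕ) (l : ℕ) (Q : Set (Tup d n)) : Prop :=
  ∃ S : (j : Fin d) → Tup d n → Submodule (ZMod 2) (Fin (n j) → ZMod 2),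
    (∀ j : Fin d, ∀ u u' : Tup d n, (∀ i : Fin d, i < j → u i = u' i) → S j u = S j u') ∧
    (∀ j : Fin d, ∀ u : Tup d n, n j - Module.finrank (ZMod 2) (S j u) ≤ l) ∧
    Q = {u : Tup d n | ∀ j : Fin d, u j ∈ S j u}

/-- `𝒢 = F_2^{n_1} ⊗ ⋯ ⊗ F_2^{n_d}`, realized as `d`-dimensional arrays. -/
abbrev Arr (d : ℕ) (n : Fin d → ℕ) := ((i : Fin d) → Fin (n i)) → ZMod 2

/-- The rank-one tensor `u_1 ⊗ ⋯ ⊗ u_d`. -/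
def tensorOf (d : ℕ) (n : Fin d → ℕ) (u : Tup d n) : Arr d n :=
  fun x => ∏ i, u i (x i)

/-- The set `cℬ'`: elements of `𝒢` expressible as a sum of at most `c` rank-one tensors
with tuples from `B'`. -/
def sumAtMost (d : ℕ) (n : Fin d → ℕ) (c : ℕ) (B' : Finset (Tup d n)) : Set (Arr d n) :=
  {x | ∃ s : Multiset (Tup d n), Multiset.card s ≤ c ∧ (∀ u ∈ s, u ∈ B') ∧
    x = (s.map (tensorOf d n)).sum}

set_option maxHeartbeats 1000000
set_option maxHeartbeats 1000000

namespace Stmt13Aux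

variable {m : ℕ}

noncomputable def sgn (a : ZMod 2) : ℝ := if a = 0 then 1 else -1

lemma eq_one_of_ne (a : ZMod 2) (h : a ≠ 0) : a = 1 := by revert h; revert a; decide

lemma sgn_add (a b : ZMod 2) : sgn (a + b) = sgn a * sgn b := by
  unfold sgn
  by_cases ha : a = 0 <;> by_cases hb : b = 0
  · simp [ha, hb]
  · simp [ha, hb]
  · simp [ha, hb]
  · rw [eq_one_of_ne a ha, eq_one_of_ne b hb]
    rw [if_pos (by decide : (1 : ZMod 2) + 1 = 0)]
    norm_num

lemma sgn_zero : sgn (0 : ZMod 2) = 1 := by simp [sgn]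

lemma sgn_sum {ι : Type*} (s : Finset ι) (f : ι → ZMod 2) :
    sgn (∑ i ∈ s, f i) = ∏ i ∈ s, sgn (f i) := by
  classical
  induction s using Finset.cons_induction with
  | empty => simp [sgn_zero]
  | cons a s ha ih => rw [Finset.sum_cons, Finset.prod_cons, sgn_add, ih]

def ip (t x : Fin m → ZMod 2) : ZMod 2 := ∑ i, t i * x i

noncomputable def chi (t x : Fin m → ZMod 2) : ℝ := sgn (ip t x)

lemma ip_comm (t x : Fin m → ZMod 2) : ip t x = ip x t := by
  unfold ip; exact Finset.sum_congr rfl fun i _ => mul_comm _ _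

lemma ip_add_right (t x y : Fin m → ZMod 2) : ip t (x + y) = ip t x + ip t y := by
  unfold ip; rw [← Finset.sum_add_distrib]
  exact Finset.sum_congr rfl fun i _ => by simp [mul_add]

lemma chi_mul (t x y : Fin m → ZMod 2) : chi t x * chi t y = chi t (x + y) := by
  unfold chi; rw [ip_add_right, sgn_add]

lemma ip_zero_right (t : Fin m → ZMod 2) : ip t 0 = 0 := by simp [ip]

lemma chi_zero_right (t : Fin m → ZMod 2) : chi t 0 = 1 := by
  unfold chi; rw [ip_zero_right, sgn_zero]

lemma chi_abs (t x : Fin m → ZMod 2) : |chi t x| = 1 := by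
  unfold chi sgn; split <;> norm_num

lemma sum_chi (t : Fin m → ZMod 2) :
    ∑ x : Fin m → ZMod 2, chi t x = if t = 0 then (2 ^ m : ℝ) else 0 := by
  have key : ∀ x, chi t x = ∏ i, sgn (t i * x i) := fun x => sgn_sum _ _
  simp only [key]
  rw [← Fintype.prod_sum (κ := fun _ : Fin m => ZMod 2) (f := fun i a => sgn (t i * a))]
  by_cases ht : t = 0
  · subst ht
    simp [sgn_zero]
  · rw [if_neg ht]
    obtain ⟨i0, hi0⟩ : ∃ i, t i ≠ 0 := by
      by_contra h
      push_neg at h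
      exact ht (funext h)
    apply Finset.prod_eq_zero (Finset.mem_univ i0)
    have h1 : t i0 = 1 := eq_one_of_ne _ hi0
    rw [h1]
    show ∑ a : ZMod 2, sgn (1 * a) = 0
    rw [show (Finset.univ : Finset (ZMod 2)) = {0, 1} from rfl]
    rw [Finset.sum_insert (by decide)]
    simp [sgn]

lemma sum_chi' (x : Fin m → ZMod 2) :
    ∑ t : Fin m → ZMod 2, chi t x = if x = 0 then (2 ^ m : ℝ) else 0 := by
  have h : ∀ t, chi t x = chi x t := fun t => by unfold chi; rw [ip_comm]
  simp only [h]; exact sum_chi x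

lemma add_self' (a : Fin m → ZMod 2) : a + a = 0 := by
  funext i
  show a i + a i = 0
  generalize a i = p; revert p; decide

lemma add_eq_zero_iff' (a b : Fin m → ZMod 2) : a + b = 0 ↔ b = a := by
  constructor
  · intro h
    have : a + (a + b) = a + 0 := by rw [h]
    rwa [← add_assoc, add_self', zero_add, add_zero] at this
  · intro h; subst h; exact add_self' _

/-- Fourier transform (unnormalized). -/
noncomputable def hat (p : (Fin m → ZMod 2) → ℝ) (t : Fin m → ZMod 2) : ℝ :=
  ∑ x, p x * chi t x

/-- Convolution. -/
noncomputable def conv (p q : (Fin m → ZMod 2) → ℝ) (x : Fin m → ZMod 2) : ℝ :=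
  ∑ y, p y * q (y + x)

lemma cancel_left (y x : Fin m → ZMod 2) : y + (y + x) = x := by
  rw [← add_assoc, add_self', zero_add]

lemma hat_conv (p q : (Fin m → ZMod 2) → ℝ) (t : Fin m → ZMod 2) :
    hat (conv p q) t = hat p t * hat q t := by
  unfold hat conv
  calc (∑ x, (∑ y, p y * q (y + x)) * chi t x)
      = ∑ x, ∑ y, p y * q (y + x) * chi t x := by
        exact Finset.sum_congr rfl fun x _ => Finset.sum_mul ..
    _ = ∑ y, ∑ x, p y * q (y + x) * chi t x := Finset.sum_comm
    _ = ∑ y, ∑ z, p y * q z * chi t (y + z) := by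
        refine Finset.sum_congr rfl fun y _ => ?_
        refine Fintype.sum_equiv (Equiv.addLeft y)
          (fun x => p y * q (y + x) * chi t x) (fun z => p y * q z * chi t (y + z))
          fun x => ?_
        simp only [Equiv.coe_addLeft, cancel_left]
    _ = ∑ y, ∑ z, (p y * chi t y) * (q z * chi t z) := by
        refine Finset.sum_congr rfl fun y _ => Finset.sum_congr rfl fun z _ => ?_
        rw [mul_mul_mul_comm, chi_mul]
    _ = (∑ y, p y * chi t y) * (∑ z, q z * chi t z) := (Finset.sum_mul_sum ..).symm

lemma inversion (p : (Fin m → ZMod 2) → ℝ) (x : Fin m → ZMod 2) :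
    ∑ t, hat p t * chi t x = 2 ^ m * p x := by
  unfold hat
  have h1 : ∀ t, (∑ y, p y * chi t y) * chi t x = ∑ y, p y * chi t (y + x) := by
    intro t
    rw [Finset.sum_mul]
    exact Finset.sum_congr rfl fun y _ => by rw [mul_assoc, chi_mul]
  simp only [h1]
  rw [Finset.sum_comm]
  have h2 : ∀ y, ∑ t, p y * chi t (y + x) = p y * (if y + x = 0 then (2^m : ℝ) else 0) := by
    intro y
    rw [← Finset.mul_sum, sum_chi']
  simp only [h2]
  have h3 : ∀ y, p y * (if y + x = 0 then (2^m : ℝ) else 0)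
      = if y = x then (2:ℝ)^m * p y else 0 := by
    intro y
    by_cases h : y = x
    · subst h; rw [if_pos (add_self' y), if_pos rfl]; ring
    · rw [if_neg h, if_neg, mul_zero]
      rw [add_eq_zero_iff']
      intro hxy
      exact h hxy.symm
  simp only [h3]
  rw [Finset.sum_ite_eq' Finset.univ x (fun y => (2:ℝ)^m * p y)]
  simp


section Bogolyubov

variable (A : Finset (Fin m → ZMod 2))

noncomputable def ind : (Fin m → ZMod 2) → ℝ := fun x => if x ∈ A then (1:ℝ) else 0

lemma ind_nonneg (x : Fin m → ZMod 2) : 0 ≤ ind A x := by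
  unfold ind; split <;> norm_num

lemma ind_mul_self (x : Fin m → ZMod 2) : ind A x * ind A x = ind A x := by
  unfold ind; split <;> norm_num

lemma ind_pos_iff (x : Fin m → ZMod 2) : 0 < ind A x ↔ x ∈ A := by
  unfold ind; split <;> simp_all

lemma sum_ind : ∑ x, ind A x = A.card := by
  unfold ind
  rw [Finset.sum_ite_mem, Finset.univ_inter, Finset.sum_const, nsmul_eq_mul, mul_one]

lemma hat_ind_zero : hat (ind A) 0 = A.card := by
  unfold hat
  have h : ∀ x : Fin m → ZMod 2, chi 0 x = 1 := by
    intro x; unfold chi; rw [ip_comm, ip_zero_right, sgn_zero]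
  simp only [h, mul_one]
  exact sum_ind A

lemma parseval : ∑ t, (hat (ind A) t) ^ 2 = 2 ^ m * A.card := by
  have h1 : ∀ t : Fin m → ZMod 2, hat (conv (ind A) (ind A)) t = hat (ind A) t ^ 2 := by
    intro t; rw [hat_conv, sq]
  calc ∑ t, (hat (ind A) t) ^ 2 = ∑ t, hat (conv (ind A) (ind A)) t * chi t 0 := by
        simp only [h1, chi_zero_right, mul_one]
    _ = 2 ^ m * conv (ind A) (ind A) 0 := inversion _ 0
    _ = 2 ^ m * A.card := by
        unfold conv
        congr 1
        rw [← sum_ind A]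
        exact Finset.sum_congr rfl fun y _ => by rw [add_zero, ind_mul_self]

lemma key4 (x : Fin m → ZMod 2) :
    ∑ t, (hat (ind A) t) ^ 4 * chi t x
      = 2 ^ m * conv (conv (ind A) (ind A)) (conv (ind A) (ind A)) x := by
  have h1 : ∀ t : Fin m → ZMod 2,
      hat (conv (conv (ind A) (ind A)) (conv (ind A) (ind A))) t = hat (ind A) t ^ 4 := by
    intro t; rw [hat_conv, hat_conv]; ring
  calc ∑ t, (hat (ind A) t) ^ 4 * chi t x
      = ∑ t, hat (conv (conv (ind A) (ind A)) (conv (ind A) (ind A))) t * chi t x := by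
        simp only [h1]
    _ = _ := inversion _ x

lemma conv_nonneg {p q : (Fin m → ZMod 2) → ℝ} (hp : ∀ y, 0 ≤ p y) (hq : ∀ y, 0 ≤ q y)
    (x : Fin m → ZMod 2) : 0 ≤ conv p q x :=
  Finset.sum_nonneg fun y _ => mul_nonneg (hp y) (hq (y + x))

lemma conv_pos {p q : (Fin m → ZMod 2) → ℝ} (hp : ∀ y, 0 ≤ p y) (hq : ∀ y, 0 ≤ q y)
    {x : Fin m → ZMod 2} (h : 0 < conv p q x) : ∃ y, 0 < p y ∧ 0 < q (y + x) := by
  by_contra hc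
  push_neg at hc
  have hz : conv p q x = 0 := by
    unfold conv
    apply Finset.sum_eq_zero
    intro y _
    rcases lt_or_eq_of_le (hp y) with h1 | h1
    · rcases lt_or_eq_of_le (hq (y + x)) with h2 | h2
      · exact absurd h2 (not_lt.2 (hc y h1))
      · rw [← h2, mul_zero]
    · rw [← h1, zero_mul]
  rw [hz] at h; exact lt_irrefl _ h

theorem bogolyubov (δ' : ℝ) (hδ : 0 < δ') (hA : δ' * 2 ^ m ≤ A.card) :
    ∃ V : Submodule (ZMod 2) (Fin m → ZMod 2),
      m - Module.finrank (ZMod 2) V ≤ ⌈2 / δ' ^ 2⌉₊ ∧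
      ∀ x ∈ V, ∃ a b c e, a ∈ A ∧ b ∈ A ∧ c ∈ A ∧ e ∈ A ∧ a + b + c + e = x := by
  classical
  set N : ℝ := 2 ^ m with hN
  have hN0 : (0:ℝ) < N := by positivity
  set a : ℝ := (A.card : ℝ) with ha
  have ha0 : 0 < a := lt_of_lt_of_le (by positivity) hA
  have haN : a ≤ N := by
    have := Finset.card_le_univ A
    have hcard : Fintype.card (Fin m → ZMod 2) = 2 ^ m := by
      rw [Fintype.card_fun, Fintype.card_fin]
      norm_num
    rw [ha, hN]
    exact_mod_cast (by simpa [hcard] using this : A.card ≤ 2 ^ m)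
  set F : (Fin m → ZMod 2) → ℝ := hat (ind A) with hF
  set K : Finset (Fin m → ZMod 2) :=
    Finset.univ.filter (fun t => a ^ 3 ≤ 2 * N * F t ^ 2) with hK
  -- card bound on K
  have hParse : ∑ t, F t ^ 2 = N * a := parseval A
  have hKsum : (K.card : ℝ) * a ^ 3 ≤ 2 * N * (N * a) := by
    have h1 : ∀ t ∈ K, a ^ 3 ≤ 2 * N * F t ^ 2 := fun t ht => (Finset.mem_filter.1 ht).2
    have h2 : (K.card : ℝ) * a ^ 3 ≤ ∑ t ∈ K, 2 * N * F t ^ 2 := by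
      calc (K.card : ℝ) * a ^ 3 = ∑ _t ∈ K, a ^ 3 := by
            rw [Finset.sum_const, nsmul_eq_mul]
        _ ≤ _ := Finset.sum_le_sum h1
    have h3 : ∑ t ∈ K, 2 * N * F t ^ 2 ≤ ∑ t, 2 * N * F t ^ 2 := by
      apply Finset.sum_le_sum_of_subset_of_nonneg (Finset.subset_univ K)
      intro t _ _
      positivity
    calc (K.card : ℝ) * a ^ 3 ≤ ∑ t, 2 * N * F t ^ 2 := h2.trans h3
      _ = 2 * N * (N * a) := by rw [← Finset.mul_sum, hParse]
  have hKcard : (K.card : ℝ) ≤ 2 / δ' ^ 2 := by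
    have h2 : (K.card : ℝ) * a ^ 2 ≤ 2 * N ^ 2 := by
      have := hKsum
      nlinarith [ha0, hN0]
    have h3 : δ' ^ 2 * N ^ 2 ≤ a ^ 2 := by
      calc δ' ^ 2 * N ^ 2 = (δ' * N) ^ 2 := by ring
        _ ≤ a ^ 2 := pow_le_pow_left₀ (by positivity) hA 2
    have h4 : (K.card : ℝ) * (δ' ^ 2 * N ^ 2) ≤ 2 * N ^ 2 :=
      le_trans (mul_le_mul_of_nonneg_left h3 (Nat.cast_nonneg _)) h2
    have h5 : (K.card : ℝ) * δ' ^ 2 ≤ 2 := by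
      have := mul_pos hN0 hN0
      nlinarith
    exact (le_div_iff₀ (by positivity)).2 h5
  have hKle : K.card ≤ ⌈2 / δ' ^ 2⌉₊ := by
    have := hKcard.trans (Nat.le_ceil (2 / δ' ^ 2))
    exact_mod_cast this
  -- the subspace
  let Φ : (Fin m → ZMod 2) →ₗ[ZMod 2] (↥K → ZMod 2) :=
    { toFun := fun x t => ip (t : Fin m → ZMod 2) x
      map_add' := fun x y => by
        funext t
        exact ip_add_right _ x y
      map_smul' := fun z x => by
        funext t
        show ip _ (z • x) = z • ip _ x
        unfold ip
        rw [smul_eq_mul, Finset.mul_sum]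
        exact Finset.sum_congr rfl fun i _ => by
          simp only [Pi.smul_apply, smul_eq_mul]; ring }
  refine ⟨LinearMap.ker Φ, ?_, ?_⟩
  · have hrn := LinearMap.finrank_range_add_finrank_ker Φ
    have hdom : Module.finrank (ZMod 2) (Fin m → ZMod 2) = m := by
      rw [Module.finrank_pi, Fintype.card_fin]
    have hcod : Module.finrank (ZMod 2) (↥K → ZMod 2) = K.card := by
      rw [Module.finrank_pi, Fintype.card_coe]
    have hrange : Module.finrank (ZMod 2) (LinearMap.range Φ) ≤ K.card := by
      rw [← hcod]
      exact (LinearMap.range Φ).finrank_le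
    rw [hdom] at hrn
    omega
  · intro x hx
    have hxK : ∀ t ∈ K, ip t x = 0 := by
      intro t ht
      have : Φ x = 0 := hx
      exact congrFun this ⟨t, ht⟩
    have hchi1 : ∀ t ∈ K, chi t x = 1 := by
      intro t ht
      unfold chi
      rw [hxK t ht, sgn_zero]
    -- 0 ∈ K
    have hF0 : F 0 = a := hat_ind_zero A
    have h0K : (0 : Fin m → ZMod 2) ∈ K := by
      rw [hK, Finset.mem_filter]
      refine ⟨Finset.mem_univ _, ?_⟩
      rw [hF0]
      nlinarith [ha0, haN, hN0]
    -- split the sum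
    have hsplit := Finset.sum_filter_add_sum_filter_not Finset.univ
      (fun t => a ^ 3 ≤ 2 * N * F t ^ 2) (fun t => F t ^ 4 * chi t x)
    have hSK : a ^ 4 ≤ ∑ t ∈ K, F t ^ 4 * chi t x := by
      have heq : ∑ t ∈ K, F t ^ 4 * chi t x = ∑ t ∈ K, F t ^ 4 :=
        Finset.sum_congr rfl fun t ht => by rw [hchi1 t ht, mul_one]
      rw [heq]
      calc a ^ 4 = F 0 ^ 4 := by rw [hF0]
        _ ≤ ∑ t ∈ K, F t ^ 4 :=
          Finset.single_le_sum (f := fun t => F t ^ 4) (fun t _ => by positivity) h0K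
    have hSnotK : -(a ^ 4 / 2) ≤ ∑ t ∈ Finset.univ.filter
        (fun t => ¬ a ^ 3 ≤ 2 * N * F t ^ 2), F t ^ 4 * chi t x := by
      set θ2 : ℝ := a ^ 3 / (2 * N) with hθ2
      have hθ2nn : 0 ≤ θ2 := by positivity
      have hterm : ∀ t ∈ Finset.univ.filter (fun t => ¬ a ^ 3 ≤ 2 * N * F t ^ 2),
          -(θ2 * F t ^ 2) ≤ F t ^ 4 * chi t x := by
        intro t ht
        have hlt : F t ^ 2 < θ2 := by
          have h := (Finset.mem_filter.1 ht).2
          push_neg at h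
          rw [hθ2, lt_div_iff₀ (by positivity)]
          linarith [h]
        have h4 : F t ^ 4 ≤ θ2 * F t ^ 2 := by nlinarith [sq_nonneg (F t)]
        have habs : |F t ^ 4 * chi t x| = F t ^ 4 := by
          rw [abs_mul, chi_abs, mul_one, abs_of_nonneg (by positivity)]
        calc -(θ2 * F t ^ 2) ≤ -(F t ^ 4) := by linarith
          _ ≤ F t ^ 4 * chi t x := by
            have := neg_abs_le (F t ^ 4 * chi t x)
            rw [habs] at this
            exact this
      calc -(a ^ 4 / 2) = -(θ2 * (N * a)) := by
            rw [hθ2]; field_simp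
        _ ≤ -(θ2 * ∑ t ∈ Finset.univ.filter
              (fun t => ¬ a ^ 3 ≤ 2 * N * F t ^ 2), F t ^ 2) := by
            apply neg_le_neg
            apply mul_le_mul_of_nonneg_left _ hθ2nn
            calc (∑ t ∈ Finset.univ.filter (fun t => ¬ a ^ 3 ≤ 2 * N * F t ^ 2), F t ^ 2)
                ≤ ∑ t, F t ^ 2 := Finset.sum_le_sum_of_subset_of_nonneg
                  (Finset.subset_univ _) (fun t _ _ => by positivity)
              _ = N * a := hParse
        _ = ∑ t ∈ Finset.univ.filter (fun t => ¬ a ^ 3 ≤ 2 * N * F t ^ 2),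
              -(θ2 * F t ^ 2) := by
            rw [Finset.mul_sum, neg_eq_neg_one_mul, Finset.mul_sum]
            exact Finset.sum_congr rfl fun t _ => by ring
        _ ≤ _ := Finset.sum_le_sum hterm
    have htotal : a ^ 4 / 2 ≤ ∑ t, F t ^ 4 * chi t x := by
      rw [← hsplit]
      have : ∑ t ∈ Finset.univ.filter (fun t => a ^ 3 ≤ 2 * N * F t ^ 2),
          F t ^ 4 * chi t x = ∑ t ∈ K, F t ^ 4 * chi t x := by rw [hK]
      rw [this]
      linarith
    have hgg : 0 < conv (conv (ind A) (ind A)) (conv (ind A) (ind A)) x := by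
      have hk4 := key4 A x
      have : (0:ℝ) < 2 ^ m * conv (conv (ind A) (ind A)) (conv (ind A) (ind A)) x := by
        rw [← hk4]
        calc (0:ℝ) < a ^ 4 / 2 := by positivity
          _ ≤ _ := htotal
      nlinarith [this, hN0]
    -- extract the four elements
    obtain ⟨y, hy1, hy2⟩ := conv_pos (conv_nonneg (ind_nonneg A) (ind_nonneg A))
      (conv_nonneg (ind_nonneg A) (ind_nonneg A)) hgg
    obtain ⟨p, hp1, hp2⟩ := conv_pos (ind_nonneg A) (ind_nonneg A) hy1
    obtain ⟨q, hq1, hq2⟩ := conv_pos (ind_nonneg A) (ind_nonneg A) hy2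
    refine ⟨p, p + y, q, q + (y + x), (ind_pos_iff A p).1 hp1, (ind_pos_iff A _).1 hp2,
      (ind_pos_iff A q).1 hq1, (ind_pos_iff A _).1 hq2, ?_⟩
    funext i
    show p i + (p i + y i) + q i + (q i + (y i + x i)) = x i
    generalize p i = pp; generalize q i = qq; generalize y i = yy; generalize x i = xx
    revert pp qq yy xx
    decide

end Bogolyubov


section Main

lemma codim_inf {k : ℕ} (W₁ W₂ : Submodule (ZMod 2) (Fin k → ZMod 2)) {l₁ l₂ : ℕ}
    (h₁ : k - Module.finrank (ZMod 2) W₁ ≤ l₁) (h₂ : k - Module.finrank (ZMod 2) W₂ ≤ l₂) :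
    k - Module.finrank (ZMod 2) ↥(W₁ ⊓ W₂) ≤ l₁ + l₂ := by
  have e := Submodule.finrank_sup_add_finrank_inf_eq W₁ W₂
  have hfull : Module.finrank (ZMod 2) (Fin k → ZMod 2) = k := by
    rw [Module.finrank_pi, Fintype.card_fin]
  have hs : Module.finrank (ZMod 2) ↥(W₁ ⊔ W₂) ≤ k := by
    exact le_trans (Submodule.finrank_le _) hfull.le
  have h1' : Module.finrank (ZMod 2) ↥W₁ ≤ k := by
    exact le_trans (Submodule.finrank_le _) hfull.le
  have h2' : Module.finrank (ZMod 2) ↥W₂ ≤ k := by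
    exact le_trans (Submodule.finrank_le _) hfull.le
  omega

lemma card_tup (d : ℕ) (n : Fin d → ℕ) :
    Fintype.card ((i : Fin d) → Fin (n i) → ZMod 2) = 2 ^ (∑ i, n i) := by
  rw [Fintype.card_pi]
  have h : ∀ i : Fin d, Fintype.card (Fin (n i) → ZMod 2) = 2 ^ (n i) := by
    intro i
    rw [Fintype.card_fun, Fintype.card_fin]
    norm_num
  rw [Finset.prod_congr rfl fun i _ => h i]
  exact Finset.prod_pow_eq_pow_sum _ _ _

lemma multiset_sum_apply {α : Type*} {β : α → Type*} [∀ a, AddCommMonoid (β a)]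
    (s : Multiset ((a : α) → β a)) (x : α) :
    s.sum x = (s.map (fun g => g x)).sum := by
  induction s using Multiset.induction_on with
  | empty => simp
  | cons a s ih => simp [ih]

end Main


section Induction

theorem mainInd (d : ℕ) :
    ∃ c : ℕ, 0 < c ∧ ∀ δ : ℝ, 0 < δ → ∃ l : ℕ,
      ∀ n : Fin d → ℕ, ∀ B' : Finset (Tup d n), δ * 2 ^ (∑ i, n i) ≤ (B'.card : ℝ) →
        ∃ Q : Set (Tup d n), IsSystem d n l Q ∧
          ∀ u ∈ Q, tensorOf d n u ∈ sumAtMost d n c B' := by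
  induction d with
  | zero =>
    refine ⟨1, one_pos, fun δ hδ => ⟨0, fun n B' hB => ?_⟩⟩
    have hB'ne : B'.Nonempty := by
      rw [← Finset.card_pos]
      have h0 : (0:ℝ) < (B'.card : ℝ) := by
        refine lt_of_lt_of_le ?_ hB
        simp
        positivity
      exact_mod_cast h0
    obtain ⟨u0, hu0⟩ := hB'ne
    refine ⟨Set.univ, ⟨fun j => j.elim0, fun j => j.elim0, fun j => j.elim0, ?_⟩, ?_⟩
    · ext u
      simp only [Set.mem_univ, Set.mem_setOf_eq, true_iff]
      exact fun j => j.elim0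
    · intro u _
      have hu : u = u0 := Subsingleton.elim u u0
      refine ⟨{u0}, by simp, by simpa using hu0, ?_⟩
      rw [hu]
      simp
  | succ d ih =>
    obtain ⟨c', hc', H⟩ := ih
    refine ⟨4 * c', by positivity, fun δ hδ => ?_⟩
    obtain ⟨l', hl'⟩ := H (δ/2) (by positivity)
    refine ⟨max ⌈2 / (δ/2)^2⌉₊ (4 * l'), fun n B' hB => ?_⟩
    classical
    -- notation
    have hn'def : True := trivial
    set n' : Fin d → ℕ := fun i => n i.succ with hn'
    set M : ℕ := ∑ i, n' i with hM
    -- fibers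
    set fib : (Fin (n 0) → ZMod 2) → Finset (Tup d n') :=
      fun y => Finset.univ.filter (fun w => Fin.cons y w ∈ B') with hfib
    have hsum_fib : ∑ y : Fin (n 0) → ZMod 2, (fib y).card = B'.card := by
      rw [Finset.card_eq_sum_card_fiberwise
        (f := fun u : Tup (d+1) n => u 0) (t := Finset.univ) (fun u _ => Finset.mem_univ _)]
      refine (Finset.sum_congr rfl fun y _ => ?_).symm
      apply Finset.card_bij (fun u _ => Fin.tail u)
      · intro u hu
        have h := Finset.mem_filter.1 hu
        rw [hfib]
        simp only [Finset.mem_filter, Finset.mem_univ, true_and]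
        rw [← h.2, Fin.cons_self_tail]
        exact h.1
      · intro u1 h1 u2 h2 heq
        have e1 := (Finset.mem_filter.1 h1).2
        have e2 := (Finset.mem_filter.1 h2).2
        rw [← Fin.cons_self_tail u1, ← Fin.cons_self_tail u2, e1, e2, heq]
      · intro w hw
        rw [hfib] at hw
        simp only [Finset.mem_filter, Finset.mem_univ, true_and] at hw
        refine ⟨Fin.cons y w, ?_, ?_⟩
        · exact Finset.mem_filter.2 ⟨hw, Fin.cons_zero _ _⟩
        · rw [Fin.tail_cons]
    -- dense fibers
    set A : Finset (Fin (n 0) → ZMod 2) :=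
      Finset.univ.filter (fun y => (δ/2) * 2 ^ M ≤ ((fib y).card : ℝ)) with hA
    have hfib_le : ∀ y, ((fib y).card : ℝ) ≤ 2 ^ M := by
      intro y
      have h1 : (fib y).card ≤ Fintype.card (Tup d n') := Finset.card_le_univ _
      have h2 : Fintype.card (Tup d n') = 2 ^ M := card_tup d n'
      exact_mod_cast h2 ▸ h1
    have hAcard : (δ/2) * 2 ^ (n 0) ≤ (A.card : ℝ) := by
      have hBsum : (B'.card : ℝ) = ∑ y : Fin (n 0) → ZMod 2, ((fib y).card : ℝ) := by
        rw [← hsum_fib]; push_cast; ring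
      have hsplit := Finset.sum_filter_add_sum_filter_not Finset.univ
        (fun y => (δ/2) * 2 ^ M ≤ ((fib y).card : ℝ)) (fun y => ((fib y).card : ℝ))
      have hA1 : ∑ y ∈ Finset.univ.filter
          (fun y => (δ/2) * 2 ^ M ≤ ((fib y).card : ℝ)), ((fib y).card : ℝ)
          ≤ (A.card : ℝ) * 2 ^ M := by
        rw [hA]
        calc ∑ y ∈ Finset.univ.filter
              (fun y => (δ/2) * 2 ^ M ≤ ((fib y).card : ℝ)), ((fib y).card : ℝ)
            ≤ ∑ _y ∈ Finset.univ.filter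
              (fun y => (δ/2) * 2 ^ M ≤ ((fib y).card : ℝ)), (2 ^ M : ℝ) :=
              Finset.sum_le_sum fun y _ => hfib_le y
          _ = _ := by rw [Finset.sum_const, nsmul_eq_mul]
      have hA2 : ∑ y ∈ Finset.univ.filter
          (fun y => ¬ ((δ/2) * 2 ^ M ≤ ((fib y).card : ℝ))), ((fib y).card : ℝ)
          ≤ (2 : ℝ) ^ (n 0) * ((δ/2) * 2 ^ M) := by
        calc ∑ y ∈ Finset.univ.filter
              (fun y => ¬ ((δ/2) * 2 ^ M ≤ ((fib y).card : ℝ))), ((fib y).card : ℝ)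
            ≤ ∑ _y ∈ Finset.univ.filter
              (fun y => ¬ ((δ/2) * 2 ^ M ≤ ((fib y).card : ℝ))), ((δ/2) * 2 ^ M) :=
              Finset.sum_le_sum fun y hy => le_of_not_ge (Finset.mem_filter.1 hy).2
          _ = ((Finset.univ.filter
              (fun y => ¬ ((δ/2) * 2 ^ M ≤ ((fib y).card : ℝ)))).card : ℝ) * ((δ/2) * 2 ^ M) := by
              rw [Finset.sum_const, nsmul_eq_mul]
          _ ≤ (2 : ℝ) ^ (n 0) * ((δ/2) * 2 ^ M) := by
              apply mul_le_mul_of_nonneg_right _ (by positivity)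
              have h1 : (Finset.univ.filter
                  (fun y => ¬ ((δ/2) * 2 ^ M ≤ ((fib y).card : ℝ)))).card
                  ≤ Fintype.card (Fin (n 0) → ZMod 2) := Finset.card_le_univ _
              have h2 : Fintype.card (Fin (n 0) → ZMod 2) = 2 ^ (n 0) := by
                rw [Fintype.card_fun, Fintype.card_fin]; norm_num
              rw [h2] at h1
              exact_mod_cast h1
      have hBtot : δ * (2 ^ (n 0) * 2 ^ M) ≤ (B'.card : ℝ) := by
        have hsum : (∑ i, n i) = n 0 + M := by
          rw [hM, hn', Fin.sum_univ_succ]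
        rw [← pow_add, ← hsum]
        exact hB
      have h2M : (0:ℝ) < 2 ^ M := by positivity
      rw [hBsum, ← hsplit] at hBtot
      have key : (δ/2) * 2 ^ (n 0) * 2 ^ M ≤ (A.card : ℝ) * 2 ^ M := by nlinarith
      exact le_of_mul_le_mul_right (by linarith) h2M
    -- Bogolyubov
    obtain ⟨V, hVcodim, hVsum⟩ := bogolyubov A (δ/2) (by positivity) hAcard
    -- decompositions
    have hdec0 : ∀ x : Fin (n 0) → ZMod 2,
        ∃ p : (Fin (n 0) → ZMod 2) × (Fin (n 0) → ZMod 2) ×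
          (Fin (n 0) → ZMod 2) × (Fin (n 0) → ZMod 2), x ∈ V →
          p.1 ∈ A ∧ p.2.1 ∈ A ∧ p.2.2.1 ∈ A ∧ p.2.2.2 ∈ A ∧
            p.1 + p.2.1 + p.2.2.1 + p.2.2.2 = x := by
      intro x
      by_cases hx : x ∈ V
      · obtain ⟨a, b, c, e, h1, h2, h3, h4, h5⟩ := hVsum x hx
        exact ⟨(a, b, c, e), fun _ => ⟨h1, h2, h3, h4, h5⟩⟩
      · exact ⟨(0, 0, 0, 0), fun h => absurd h hx⟩
    choose dec hdec using hdec0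
    -- systems on fibers
    have hsys : ∀ y : Fin (n 0) → ZMod 2,
        ∃ S : (j : Fin d) → Tup d n' → Submodule (ZMod 2) (Fin (n' j) → ZMod 2),
          (∀ j, ∀ u u' : Tup d n', (∀ i, i < j → u i = u' i) → S j u = S j u') ∧
          (∀ j u, n' j - Module.finrank (ZMod 2) (S j u) ≤ l') ∧
          (∀ w : Tup d n', (∀ j, w j ∈ S j w) → y ∈ A →
            tensorOf d n' w ∈ sumAtMost d n' c' (fib y)) := by
      intro y
      by_cases hy : y ∈ A
      · have hdense : (δ/2) * 2 ^ (∑ i, n' i) ≤ ((fib y).card : ℝ) := by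
          rw [← hM]
          have := Finset.mem_filter.1 (hA ▸ hy)
          exact this.2
        obtain ⟨Q, ⟨S, hS1, hS2, hS3⟩, hQ⟩ := hl' n' (fib y) hdense
        refine ⟨S, hS1, hS2, fun w hw _ => hQ w ?_⟩
        rw [hS3]
        exact hw
      · refine ⟨fun _ _ => ⊤, fun _ _ _ _ => rfl, fun j u => ?_, fun w _ hy' => absurd hy' hy⟩
        show n' j - Module.finrank (ZMod 2)
          (⊤ : Submodule (ZMod 2) (Fin (n' j) → ZMod 2)) ≤ l'
        have htop : Module.finrank (ZMod 2) (⊤ : Submodule (ZMod 2) (Fin (n' j) → ZMod 2))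
            = n' j := by
          rw [finrank_top, Module.finrank_pi, Fintype.card_fin]
        omega
    choose S hS1 hS2 hS3 using hsys
    -- the combined system
    set T : (j : Fin (d+1)) → Tup (d+1) n → Submodule (ZMod 2) (Fin (n j) → ZMod 2) :=
      fun j => Fin.cases
        (motive := fun j => Tup (d+1) n → Submodule (ZMod 2) (Fin (n j) → ZMod 2))
        (fun _ => V)
        (fun i u => if u 0 ∈ V then
            S (dec (u 0)).1 i (Fin.tail u) ⊓ S (dec (u 0)).2.1 i (Fin.tail u) ⊓
            S (dec (u 0)).2.2.1 i (Fin.tail u) ⊓ S (dec (u 0)).2.2.2 i (Fin.tail u)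
          else ⊤) j with hT
    refine ⟨{u : Tup (d+1) n | ∀ j, u j ∈ T j u}, ⟨T, ?_, ?_, rfl⟩, ?_⟩
    · -- compatibility
      intro j
      induction j using Fin.cases with
      | zero => intro u u' _; rfl
      | succ i =>
        intro u u' hagree
        have h0 : u 0 = u' 0 := hagree 0 (Fin.succ_pos i)
        have htail : ∀ k : Fin d, k < i → Fin.tail u k = Fin.tail u' k := by
          intro k hk
          exact hagree k.succ (by rwa [Fin.succ_lt_succ_iff])
        show (Fin.cases (motive := fun j => Tup (d+1) n →
            Submodule (ZMod 2) (Fin (n j) → ZMod 2)) (fun _ => V) _ i.succ) u = _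
        rw [hT]
        simp only [Fin.cases_succ]
        rw [h0, hS1 (dec (u' 0)).1 i _ _ htail, hS1 (dec (u' 0)).2.1 i _ _ htail,
          hS1 (dec (u' 0)).2.2.1 i _ _ htail, hS1 (dec (u' 0)).2.2.2 i _ _ htail]
    · -- codimension
      intro j
      induction j using Fin.cases with
      | zero =>
        intro u
        rw [hT]
        simp only [Fin.cases_zero]
        exact le_trans hVcodim (le_max_left _ _)
      | succ i =>
        intro u
        rw [hT]
        simp only [Fin.cases_succ]
        by_cases hu0 : u 0 ∈ V
        · show n i.succ - Module.finrank (ZMod 2) ↥(if u 0 ∈ V then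
              S (dec (u 0)).1 i (Fin.tail u) ⊓ S (dec (u 0)).2.1 i (Fin.tail u) ⊓
              S (dec (u 0)).2.2.1 i (Fin.tail u) ⊓ S (dec (u 0)).2.2.2 i (Fin.tail u)
            else ⊤) ≤ _
          rw [if_pos hu0]
          have h1 := hS2 (dec (u 0)).1 i (Fin.tail u)
          have h2 := hS2 (dec (u 0)).2.1 i (Fin.tail u)
          have h3 := hS2 (dec (u 0)).2.2.1 i (Fin.tail u)
          have h4 := hS2 (dec (u 0)).2.2.2 i (Fin.tail u)
          have hc12 := codim_inf _ _ h1 h2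
          have hc123 := codim_inf _ _ hc12 h3
          have hc1234 := codim_inf _ _ hc123 h4
          refine le_trans hc1234 (le_trans (le_of_eq ?_) (le_max_right _ _))
          ring
        · show n i.succ - Module.finrank (ZMod 2) ↥(if u 0 ∈ V then
              S (dec (u 0)).1 i (Fin.tail u) ⊓ S (dec (u 0)).2.1 i (Fin.tail u) ⊓
              S (dec (u 0)).2.2.1 i (Fin.tail u) ⊓ S (dec (u 0)).2.2.2 i (Fin.tail u)
            else ⊤) ≤ _
          rw [if_neg hu0]
          have htop : Module.finrank (ZMod 2) (⊤ : Submodule (ZMod 2)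
              (Fin (n i.succ) → ZMod 2)) = n i.succ := by
            rw [finrank_top, Module.finrank_pi, Fintype.card_fin]
          exact (Nat.sub_eq_zero_of_le (le_of_eq htop.symm)).le.trans (Nat.zero_le _)
    · -- the tensor property
      intro u hu
      have hu0 : u 0 ∈ V := by
        have h := hu 0
        rw [hT] at h
        simpa only [Fin.cases_zero] using h
      obtain ⟨hpa, hpb, hpc, hpe, hsum⟩ := hdec (u 0) hu0
      have hmem : ∀ i : Fin d, Fin.tail u i ∈
          S (dec (u 0)).1 i (Fin.tail u) ⊓ S (dec (u 0)).2.1 i (Fin.tail u) ⊓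
          S (dec (u 0)).2.2.1 i (Fin.tail u) ⊓ S (dec (u 0)).2.2.2 i (Fin.tail u) := by
        intro i
        have h := hu i.succ
        rw [hT] at h
        simp only [Fin.cases_succ] at h
        rw [if_pos hu0] at h
        exact h
      have hm1 : ∀ i, Fin.tail u i ∈ S (dec (u 0)).1 i (Fin.tail u) :=
        fun i => (Submodule.mem_inf.1 ((Submodule.mem_inf.1
          ((Submodule.mem_inf.1 (hmem i)).1)).1)).1
      have hm2 : ∀ i, Fin.tail u i ∈ S (dec (u 0)).2.1 i (Fin.tail u) :=
        fun i => (Submodule.mem_inf.1 ((Submodule.mem_inf.1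
          ((Submodule.mem_inf.1 (hmem i)).1)).1)).2
      have hm3 : ∀ i, Fin.tail u i ∈ S (dec (u 0)).2.2.1 i (Fin.tail u) :=
        fun i => (Submodule.mem_inf.1 ((Submodule.mem_inf.1 (hmem i)).1)).2
      have hm4 : ∀ i, Fin.tail u i ∈ S (dec (u 0)).2.2.2 i (Fin.tail u) :=
        fun i => (Submodule.mem_inf.1 (hmem i)).2
      obtain ⟨sa, hsa_card, hsa_mem, hsa_sum⟩ := hS3 (dec (u 0)).1 (Fin.tail u) hm1 hpa
      obtain ⟨sb, hsb_card, hsb_mem, hsb_sum⟩ := hS3 (dec (u 0)).2.1 (Fin.tail u) hm2 hpb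
      obtain ⟨sc, hsc_card, hsc_mem, hsc_sum⟩ := hS3 (dec (u 0)).2.2.1 (Fin.tail u) hm3 hpc
      obtain ⟨se, hse_card, hse_mem, hse_sum⟩ := hS3 (dec (u 0)).2.2.2 (Fin.tail u) hm4 hpe
      refine ⟨sa.map (fun w => Fin.cons (dec (u 0)).1 w) +
        sb.map (fun w => Fin.cons (dec (u 0)).2.1 w) +
        sc.map (fun w => Fin.cons (dec (u 0)).2.2.1 w) +
        se.map (fun w => Fin.cons (dec (u 0)).2.2.2 w), ?_, ?_, ?_⟩
      · simp only [Multiset.card_add, Multiset.card_map]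
        omega
      · intro v hv
        simp only [Multiset.mem_add, Multiset.mem_map] at hv
        rcases hv with ((⟨w, hw, rfl⟩ | ⟨w, hw, rfl⟩) | ⟨w, hw, rfl⟩) | ⟨w, hw, rfl⟩
        · have := hsa_mem w hw
          rw [hfib] at this
          exact (Finset.mem_filter.1 this).2
        · have := hsb_mem w hw
          rw [hfib] at this
          exact (Finset.mem_filter.1 this).2
        · have := hsc_mem w hw
          rw [hfib] at this
          exact (Finset.mem_filter.1 this).2
        · have := hse_mem w hw
          rw [hfib] at this
          exact (Finset.mem_filter.1 this).2
      · -- the sum identity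
        funext x
        have htensor : ∀ (y : Fin (n 0) → ZMod 2) (w : Tup d n'),
            tensorOf (d+1) n (Fin.cons y w) x
              = y (x 0) * tensorOf d n' w (Fin.tail x) := by
          intro y w
          show (∏ j : Fin (d+1),
              (Fin.cons (α := fun j : Fin (d+1) => Fin (n j) → ZMod 2) y w) j (x j))
            = y (x 0) * ∏ i : Fin d, w i (Fin.tail x i)
          rw [Fin.prod_univ_succ]
          have h0 : (Fin.cons (α := fun j : Fin (d+1) => Fin (n j) → ZMod 2) y w) 0 (x 0)
              = y (x 0) := by rw [Fin.cons_zero]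
          rw [h0]
          refine congrArg (y (x 0) * ·) (Finset.prod_congr rfl fun i _ => ?_)
          rw [Fin.cons_succ]
          simp [Fin.tail]
        have hLHS : tensorOf (d+1) n u x
            = u 0 (x 0) * tensorOf d n' (Fin.tail u) (Fin.tail x) := by
          unfold tensorOf
          rw [Fin.prod_univ_succ]
          rfl
        have hpart : ∀ (y : Fin (n 0) → ZMod 2) (s : Multiset (Tup d n')),
            tensorOf d n' (Fin.tail u) = (s.map (tensorOf d n')).sum →
            ((s.map (fun w => Fin.cons y w)).map (tensorOf (d+1) n)).sum x
              = y (x 0) * tensorOf d n' (Fin.tail u) (Fin.tail x) := by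
          intro y s hs
          calc ((s.map (fun w => Fin.cons y w)).map (tensorOf (d+1) n)).sum x
              = (((s.map (fun w => Fin.cons y w)).map
                  (tensorOf (d+1) n)).map (fun g => g x)).sum :=
                multiset_sum_apply _ _
            _ = (s.map (fun w => y (x 0) * tensorOf d n' w (Fin.tail x))).sum := by
                rw [Multiset.map_map, Multiset.map_map]
                exact congrArg Multiset.sum
                  (Multiset.map_congr rfl fun w _ => htensor y w)
            _ = y (x 0) * (s.map (fun w => tensorOf d n' w (Fin.tail x))).sum :=
                Multiset.sum_map_mul_left
            _ = y (x 0) * tensorOf d n' (Fin.tail u) (Fin.tail x) := by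
                congr 1
                rw [hs, multiset_sum_apply, Multiset.map_map]
                exact congrArg Multiset.sum (Multiset.map_congr rfl fun w _ => rfl)
        rw [multiset_sum_apply]
        simp only [Multiset.map_add, Multiset.sum_add]
        rw [← multiset_sum_apply, ← multiset_sum_apply, ← multiset_sum_apply,
          ← multiset_sum_apply]
        rw [hpart _ sa hsa_sum, hpart _ sb hsb_sum, hpart _ sc hsc_sum, hpart _ se hse_sum]
        rw [hLHS]
        have hy : u 0 (x 0) = (dec (u 0)).1 (x 0) + (dec (u 0)).2.1 (x 0)
            + (dec (u 0)).2.2.1 (x 0) + (dec (u 0)).2.2.2 (x 0) := by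
          have h := congrFun hsum (x 0)
          simpa using h.symm
        rw [hy]
        ring

end Induction

end Stmt13Aux

theorem stmt13 (d : ℕ) (hd : 0 < d) :
    ∃ c : ℕ, 0 < c ∧ ∀ δ : ℝ, 0 < δ → ∃ l : ℕ,
      ∀ n : Fin d → ℕ, (∀ i, 0 < n i) →
        ∀ B' : Finset (Tup d n), δ * 2 ^ (∑ i, n i) ≤ (B'.card : ℝ) →
          ∃ Q : Set (Tup d n), IsSystem d n l Q ∧
            ∀ u ∈ Q, tensorOf d n u ∈ sumAtMost d n c B' := by
  obtain ⟨c, hc, H⟩ := Stmt13Aux.mainInd d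
  refine ⟨c, hc, fun δ hδ => ?_⟩
  obtain ⟨l, hl⟩ := H δ hδ
  exact ⟨l, fun n _ B' hB => hl n B' hB⟩
end

section
/- For all positive integers d, k, l there exists a positive integer K (depending only on d, k, l) with the following property: for all positive integers n_1,…,n_d, every k-system Q ⊆ F_2^{n_1}×⋯×F_2^{n_d}, and every collection of subspaces L_I ⊆ F_2^I of codimension at most l, one for each nonempty I ⊆ [d], setting T = ∩_{∅≠I⊆[d]}(L_I⊗F_2^{I^c}) ⊆ 𝒢, there exists a K-system P ⊆ Q such that u_1⊗⋯⊗u_d ∈ T for every tuple (u_1,…,u_d) ∈ P. -/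
open Finset

/-- `F_2^I = ⊗_{i ∈ I} F_2^{n_i}`, realized as arrays indexed by coordinates in `I`. -/
abbrev F2I (d : ℕ) (n : Fin d → ℕ) (I : Finset (Fin d)) :=
  ((i : {x : Fin d // x ∈ I}) → Fin (n i.1)) → ZMod 2

/-- The `I`-slice of an array `r`, obtained by fixing the coordinates outside `I` to be `z`. -/
def arrSlice (d : ℕ) (n : Fin d → ℕ) (I : Finset (Fin d)) (r : Arr d n)
    (z : (i : {x : Fin d // x ∉ I}) → Fin (n i.1)) : F2I d n I :=
  fun y => r (fun i => if h : i ∈ I then y ⟨i, h⟩ else z ⟨i, h⟩)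

/-- The subspace `L ⊗ F_2^{I^c}` of `𝒢`: arrays all of whose `I`-slices lie in `L`. -/
def cylSub (d : ℕ) (n : Fin d → ℕ) (I : Finset (Fin d))
    (L : Submodule (ZMod 2) (F2I d n I)) : Submodule (ZMod 2) (Arr d n) where
  carrier := {r | ∀ z, arrSlice d n I r z ∈ L}
  add_mem' := fun ha hb z => L.add_mem (ha z) (hb z)
  zero_mem' := fun _ => L.zero_mem
  smul_mem' := fun c _ hr z => L.smul_mem c (hr z)


open Module

section codim

variable {K V W : Type*} [Field K] [AddCommGroup V] [Module K V] [AddCommGroup W] [Module K W]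
  [FiniteDimensional K V] [FiniteDimensional K W]

lemma my_codim_comap (f : V →ₗ[K] W) (L : Submodule K W) :
    finrank K V - finrank K ↥(L.comap f) ≤ finrank K W - finrank K L := by
  have hinj : Function.Injective (Submodule.mapQ (L.comap f) L f le_rfl) := by
    rw [← LinearMap.ker_eq_bot, eq_bot_iff]
    intro x hx
    obtain ⟨y, rfl⟩ := Submodule.Quotient.mk_surjective _ x
    rw [LinearMap.mem_ker, Submodule.mapQ_apply, Submodule.Quotient.mk_eq_zero] at hx
    simpa [Submodule.Quotient.mk_eq_zero] using hx
  have h1 := LinearMap.finrank_le_finrank_of_injective hinj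
  have h2 := Submodule.finrank_quotient_add_finrank (L.comap f)
  have h3 := Submodule.finrank_quotient_add_finrank L
  omega

lemma my_codim_inf (A B : Submodule K V) :
    finrank K V - finrank K ↥(A ⊓ B) ≤
      (finrank K V - finrank K A) + (finrank K V - finrank K B) := by
  set g : V →ₗ[K] (V ⧸ A) × (V ⧸ B) := A.mkQ.prod B.mkQ with hg
  have hker : LinearMap.ker g = A ⊓ B := by
    rw [hg, LinearMap.ker_prod, Submodule.ker_mkQ, Submodule.ker_mkQ]
  have h1 := LinearMap.finrank_range_add_finrank_ker g
  rw [hker] at h1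
  have h2 : finrank K ↥(LinearMap.range g) ≤ finrank K (V ⧸ A) + finrank K (V ⧸ B) := by
    have := (LinearMap.range g).finrank_le
    rwa [finrank_prod] at this
  have h3 := Submodule.finrank_quotient_add_finrank A
  have h4 := Submodule.finrank_quotient_add_finrank B
  have h5 := (A ⊓ B).finrank_le
  have h6 := A.finrank_le
  have h7 := B.finrank_le
  omega

lemma my_codim_finset_inf {ι : Type*} (s : Finset ι) (f : ι → Submodule K V) :
    finrank K V - finrank K ↥(s.inf f) ≤ ∑ i ∈ s, (finrank K V - finrank K (f i)) := by
  induction s using Finset.cons_induction with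
  | empty =>
    show finrank K V - finrank K ↥(⊤ : Submodule K V) ≤ _
    simp [finrank_top]
  | cons a s ha ih =>
    rw [Finset.inf_cons, Finset.sum_cons]
    exact (my_codim_inf (f a) (s.inf f)).trans (add_le_add le_rfl ih)

end codim

section mainaux

variable {d : ℕ} {n : Fin d → ℕ}

def pT (d : ℕ) (n : Fin d → ℕ) (I : Finset (Fin d)) (u : Tup d n) : F2I d n I :=
  fun y => ∏ i : {x : Fin d // x ∈ I}, u i.1 (y i)

def Phi (d : ℕ) (n : Fin d → ℕ) (I : Finset (Fin d)) (j : Fin d) (hj : j ∈ I) (u : Tup d n) :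
    (Fin (n j) → ZMod 2) →ₗ[ZMod 2] F2I d n I where
  toFun v := fun y => v (y ⟨j, hj⟩) *
    ∏ i : {x : Fin d // x ∈ I}, if i = ⟨j, hj⟩ then 1 else u i.1 (y i)
  map_add' := by intro a b; funext y; simp [add_mul]
  map_smul' := by intro c a; funext y; simp [mul_assoc]

lemma Phi_apply_self (I : Finset (Fin d)) (j : Fin d) (hj : j ∈ I) (u : Tup d n) :
    Phi d n I j hj u (u j) = pT d n I u := by
  funext y
  simp only [Phi, pT, LinearMap.coe_mk, AddHom.coe_mk]
  have key : ∀ i : {x : Fin d // x ∈ I}, u i.1 (y i) =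
      (if i = ⟨j, hj⟩ then u i.1 (y i) else 1) * (if i = ⟨j, hj⟩ then 1 else u i.1 (y i)) := by
    intro i; by_cases h : i = ⟨j, hj⟩ <;> simp [h]
  rw [Finset.prod_congr rfl (fun i _ => key i), Finset.prod_mul_distrib,
    Finset.prod_ite_eq' Finset.univ (⟨j, hj⟩ : {x : Fin d // x ∈ I}) (fun i => u i.1 (y i))]
  simp

lemma Phi_congr (I : Finset (Fin d)) (j : Fin d) (hj : j ∈ I) (u u' : Tup d n)
    (h : ∀ i ∈ I, i ≠ j → u i = u' i) : Phi d n I j hj u = Phi d n I j hj u' := by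
  refine LinearMap.ext fun v => funext fun y => ?_
  simp only [Phi, LinearMap.coe_mk, AddHom.coe_mk]
  congr 1
  refine Finset.prod_congr rfl fun i _ => ?_
  by_cases hij : i = (⟨j, hj⟩ : {x : Fin d // x ∈ I})
  · simp [hij]
  · have : i.1 ≠ j := fun hh => hij (Subtype.ext hh)
    simp [hij, h i.1 i.2 this]

lemma slice_tensor (I : Finset (Fin d)) (u : Tup d n)
    (z : (i : {x : Fin d // x ∉ I}) → Fin (n i.1)) :
    arrSlice d n I (tensorOf d n u) z =
      (∏ i : {x : Fin d // x ∉ I}, u i.1 (z i)) • pT d n I u := by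
  funext y
  simp only [arrSlice, tensorOf, pT, Pi.smul_apply, smul_eq_mul]
  rw [← Equiv.prod_comp (Equiv.sumCompl (· ∈ I))
    (fun i => u i (if h : i ∈ I then y ⟨i, h⟩ else z ⟨i, h⟩)), Fintype.prod_sum_type]
  simp only [Equiv.sumCompl_apply_inl, Equiv.sumCompl_apply_inr]
  rw [mul_comm]
  congr 1
  · refine Fintype.prod_congr _ _ fun i => ?_
    simp [i.2]
  · refine Fintype.prod_congr _ _ fun i => ?_
    simp [i.2]

end mainaux

theorem stmt14 (d k l : ℕ) (hd : 0 < d) (hk : 0 < k) (hl : 0 < l) :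
    ∃ K : ℕ, 0 < K ∧
      ∀ n : Fin d → ℕ, (∀ i, 0 < n i) →
        ∀ Q : Set (Tup d n), IsSystem d n k Q →
          ∀ L : (I : Finset (Fin d)) → Submodule (ZMod 2) (F2I d n I),
            (∀ I : Finset (Fin d), I.Nonempty →
              Module.finrank (ZMod 2) (F2I d n I) - Module.finrank (ZMod 2) (L I) ≤ l) →
            ∃ P : Set (Tup d n), P ⊆ Q ∧ IsSystem d n K P ∧
              ∀ u ∈ P, ∀ I : Finset (Fin d), I.Nonempty →
                tensorOf d n u ∈ cylSub d n I (L I) := by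
  classical
  refine ⟨k + 2 ^ d * l, by positivity, ?_⟩
  intro n hn Q hQ L hL
  obtain ⟨S, hdep, hcodim, hQeq⟩ := hQ
  set M : (j : Fin d) → Tup d n → Finset (Fin d) → Submodule (ZMod 2) (Fin (n j) → ZMod 2) :=
    fun j u I => if h : j ∈ I ∧ ∀ i ∈ I, i ≤ j then (L I).comap (Phi d n I j h.1 u) else ⊤
    with hM
  set S' : (j : Fin d) → Tup d n → Submodule (ZMod 2) (Fin (n j) → ZMod 2) :=
    fun j u => S j u ⊓ (Finset.univ : Finset (Finset (Fin d))).inf (M j u) with hS'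
  have hMcodim : ∀ (j : Fin d) (u : Tup d n) (I : Finset (Fin d)),
      n j - Module.finrank (ZMod 2) (M j u I) ≤ l := by
    intro j u I
    rw [hM]
    beta_reduce
    by_cases h : j ∈ I ∧ ∀ i ∈ I, i ≤ j
    · rw [dif_pos h]
      have h1 := my_codim_comap (Phi d n I j h.1 u) (L I)
      have h2 := hL I ⟨j, h.1⟩
      have h3 : Module.finrank (ZMod 2) (Fin (n j) → ZMod 2) = n j := by
        simp [Module.finrank_pi]
      omega
    · rw [dif_neg h]
      have h3 : Module.finrank (ZMod 2) (Fin (n j) → ZMod 2) = n j := by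
        simp [Module.finrank_pi]
      have : Module.finrank (ZMod 2)
          (⊤ : Submodule (ZMod 2) (Fin (n j) → ZMod 2)) = n j := by
        rw [finrank_top]; exact h3
      omega
  refine ⟨{u | ∀ j, u j ∈ S' j u}, ?_, ⟨S', ?_, ?_, rfl⟩, ?_⟩
  · -- P ⊆ Q
    intro u hu
    rw [hQeq]
    exact fun j => (hu j).1
  · -- dependence
    intro j u u' h
    rw [hS']
    have hSM : Finset.univ.inf (M j u) = Finset.univ.inf (M j u') := by
      refine Finset.inf_congr rfl fun I _ => ?_
      rw [hM]
      beta_reduce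
      by_cases hc : j ∈ I ∧ ∀ i ∈ I, i ≤ j
      · rw [dif_pos hc, dif_pos hc]
        have : Phi d n I j hc.1 u = Phi d n I j hc.1 u' := by
          refine Phi_congr I j hc.1 u u' fun i hi hij => ?_
          exact h i (lt_of_le_of_ne (hc.2 i hi) hij)
        rw [this]
      · rw [dif_neg hc, dif_neg hc]
    show S j u ⊓ Finset.univ.inf (M j u) = S j u' ⊓ Finset.univ.inf (M j u')
    rw [hdep j u u' h, hSM]
  · -- codimension bound
    intro j u
    have h3 : Module.finrank (ZMod 2) (Fin (n j) → ZMod 2) = n j := by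
      simp [Module.finrank_pi]
    have h1 := my_codim_inf (S j u) (Finset.univ.inf (M j u))
    have h2 := my_codim_finset_inf (Finset.univ : Finset (Finset (Fin d))) (M j u)
    have h4 : ∑ I ∈ (Finset.univ : Finset (Finset (Fin d))),
        (Module.finrank (ZMod 2) (Fin (n j) → ZMod 2) - Module.finrank (ZMod 2) (M j u I))
        ≤ 2 ^ d * l := by
      calc ∑ I ∈ (Finset.univ : Finset (Finset (Fin d))),
            (Module.finrank (ZMod 2) (Fin (n j) → ZMod 2)
              - Module.finrank (ZMod 2) (M j u I))
          ≤ ∑ _I ∈ (Finset.univ : Finset (Finset (Fin d))), l := by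
            refine Finset.sum_le_sum fun I _ => ?_
            have := hMcodim j u I
            omega
        _ = 2 ^ d * l := by
            rw [Finset.sum_const, Finset.card_univ, Fintype.card_finset, Fintype.card_fin,
              smul_eq_mul]
    have h5 := hcodim j u
    show n j - Module.finrank (ZMod 2) ↥(S j u ⊓ Finset.univ.inf (M j u)) ≤ k + 2 ^ d * l
    omega
  · -- tensors in T
    intro u hu I hI
    intro z
    rw [slice_tensor]
    refine Submodule.smul_mem _ _ ?_
    set j : Fin d := I.max' hI with hj
    have hjI : j ∈ I := I.max'_mem hI
    have hle : ∀ i ∈ I, i ≤ j := fun i hi => I.le_max' i hi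
    have hinfle : Finset.univ.inf (M j u) ≤ M j u I := Finset.inf_le (Finset.mem_univ I)
    have hmem : u j ∈ M j u I := hinfle (hu j).2
    rw [hM] at hmem
    beta_reduce at hmem
    rw [dif_pos ⟨hjI, hle⟩] at hmem
    have : Phi d n I j hjI u (u j) ∈ L I := hmem
    rwa [Phi_apply_self] at this
end
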